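/- arXiv:2105.05761 — 5 statements merged into one kernel-verified Lean document; each statement's English description precedes it below -/
import Mathlib

section
/- Let (X, d) be a pseudometric space, H a real inner product space with norm ‖·‖, P a nonempty finite subset of X, q ∈ X, and f : X → H. Let D, w, λ, β, c > 0 and 0 ≤ p ≤ 1 be real numbers. Assume: (i) ‖f(x) − f(y)‖ ≤ D·d(x, y) for all x, y ∈ X; (ii) Σ_{x,y ∈ P} ‖f(x) − f(y)‖² ≥ Σ_{x,y ∈ P} d(x, y)² (sums over ordered pairs); (iii) for every x ∈ P, the number of points y ∈ P with d(x, y) ≤ λ·D is at most p·|P|; (iv) d(x, y) ≤ β·c for all x, y ∈ P; (v) (1 − p)·λ² ≥ 16·w²; and (vi) β·c ≥ λ. Then the number of points x ∈ P with ‖f(x) − f(q)‖ ≤ w·D is at most (1 − (1 − p)·λ²/(4·β²·c²))·|P|. -/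
open Finset

set_option maxHeartbeats 1000000 in
open scoped Classical in
/-- Main lemma: if `f` is an average embedding of `P` with distortion `D` (it is
`D`-Lipschitz and does not decrease the sum of squared distances over `P`), every ball of
radius `λ·D` contains at most a `p`-fraction of `P`, `P` has diameter at most `β·c`,
`(1 − p)·λ² ≥ 16·w²` and `β·c ≥ λ`, then the number of points of `P` mapped within distance
`w·D` of `f(q)` is at most `(1 − (1 − p)·λ²/(4·β²·c²))·|P|`. -/
theorem stmt_4 {X : Type*} [PseudoMetricSpace X] {H : Type*} [NormedAddCommGroup H]
    [InnerProductSpace ℝ H] (P : Finset X) (hP : P.Nonempty) (q : X) (f : X → H)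
    (D w lam β c p : ℝ) (hD : 0 < D) (hw : 0 < w) (hlam : 0 < lam) (hβ : 0 < β)
    (hc : 0 < c) (hp0 : 0 ≤ p) (hp1 : p ≤ 1)
    (hLip : ∀ x y : X, ‖f x - f y‖ ≤ D * dist x y)
    (hAvg : ∑ x ∈ P, ∑ y ∈ P, dist x y ^ 2 ≤ ∑ x ∈ P, ∑ y ∈ P, ‖f x - f y‖ ^ 2)
    (hball : ∀ x ∈ P, ((P.filter fun y => dist x y ≤ lam * D).card : ℝ) ≤ p * P.card)
    (hdiam : ∀ x ∈ P, ∀ y ∈ P, dist x y ≤ β * c)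
    (hwlam : 16 * w ^ 2 ≤ (1 - p) * lam ^ 2)
    (hβc : lam ≤ β * c) :
    ((P.filter fun x => ‖f x - f q‖ ≤ w * D).card : ℝ) ≤
      (1 - (1 - p) * lam ^ 2 / (4 * β ^ 2 * c ^ 2)) * P.card := by
  classical
  obtain ⟨S, hSdef⟩ : ∃ S : Finset X, S = P.filter fun x => ‖f x - f q‖ ≤ w * D :=
    ⟨_, rfl⟩
  obtain ⟨n, hndef⟩ : ∃ n : ℝ, n = (P.card : ℝ) := ⟨_, rfl⟩
  obtain ⟨m, hmdef⟩ : ∃ m : ℝ, m = (S.card : ℝ) := ⟨_, rfl⟩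
  obtain ⟨A, hAdef⟩ : ∃ A : ℝ, A = (1 - p) * lam ^ 2 := ⟨_, rfl⟩
  obtain ⟨B, hBdef⟩ : ∃ B : ℝ, B = β ^ 2 * c ^ 2 := ⟨_, rfl⟩
  have hSP : S ⊆ P := hSdef ▸ filter_subset _ _
  have hmn : m ≤ n := by
    rw [hmdef, hndef]; exact_mod_cast card_le_card hSP
  have hm0 : (0:ℝ) ≤ m := hmdef ▸ Nat.cast_nonneg _
  have hn0 : (0:ℝ) < n := by
    rw [hndef]; exact_mod_cast card_pos.mpr hP
  have hwA : 16 * w ^ 2 ≤ A := hAdef ▸ hwlam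
  have hA : 0 < A := lt_of_lt_of_le (by positivity) hwA
  have hB : 0 < B := by rw [hBdef]; positivity
  have hAB : A ≤ B := by
    have h2 : lam ^ 2 ≤ (β * c) ^ 2 := by nlinarith
    rw [hAdef, hBdef]; nlinarith [sq_nonneg lam]
  -- Lower bound on the sum of squared distances
  have hlow : A * D ^ 2 * n * n ≤ ∑ x ∈ P, ∑ y ∈ P, dist x y ^ 2 := by
    have h1 : ∀ x ∈ P, A * D ^ 2 * n ≤ ∑ y ∈ P, dist x y ^ 2 := by
      intro x hx
      have hsplit : ((P.filter fun y => dist x y ≤ lam * D).card : ℝ)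
          + ((P.filter fun y => ¬ dist x y ≤ lam * D).card : ℝ) = n := by
        rw [hndef]
        exact_mod_cast card_filter_add_card_filter_not
          (s := P) (p := fun y => dist x y ≤ lam * D)
      have hTcard : (1 - p) * n ≤ ((P.filter fun y => ¬ dist x y ≤ lam * D).card : ℝ) := by
        have h := hball x hx
        rw [← hndef] at h
        linarith
      have h2 : ((P.filter fun y => ¬ dist x y ≤ lam * D).card : ℝ) * (lam * D) ^ 2
          ≤ ∑ y ∈ P.filter fun y => ¬ dist x y ≤ lam * D, dist x y ^ 2 := by
        rw [← nsmul_eq_mul]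
        refine Finset.card_nsmul_le_sum _ _ _ ?_
        intro y hy
        have hy' : ¬ dist x y ≤ lam * D := (mem_filter.mp hy).2
        have hle : lam * D ≤ dist x y := le_of_lt (not_le.mp hy')
        nlinarith [dist_nonneg (x := x) (y := y), mul_pos hlam hD]
      have h3 : ∑ y ∈ P.filter fun y => ¬ dist x y ≤ lam * D, dist x y ^ 2
          ≤ ∑ y ∈ P, dist x y ^ 2 := by
        refine Finset.sum_le_sum_of_subset_of_nonneg (filter_subset _ _) ?_
        intro y _ _; positivity
      have h4 : (1 - p) * n * (lam * D) ^ 2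
          ≤ ((P.filter fun y => ¬ dist x y ≤ lam * D).card : ℝ) * (lam * D) ^ 2 :=
        mul_le_mul_of_nonneg_right hTcard (by positivity)
      have h5 : A * D ^ 2 * n = (1 - p) * n * (lam * D) ^ 2 := by rw [hAdef]; ring
      linarith
    calc A * D ^ 2 * n * n = P.card • (A * D ^ 2 * n) := by
          rw [nsmul_eq_mul, hndef]; ring
      _ ≤ ∑ x ∈ P, ∑ y ∈ P, dist x y ^ 2 := Finset.card_nsmul_le_sum P _ _ h1
  -- Upper bound on the sum of squared image distances
  have hup : ∑ x ∈ P, ∑ y ∈ P, ‖f x - f y‖ ^ 2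
      ≤ m * m * (4 * w ^ 2 * D ^ 2) + (n * n - m * m) * (B * D ^ 2) := by
    have hrw : ∑ x ∈ P, ∑ y ∈ P, ‖f x - f y‖ ^ 2
        = ∑ z ∈ P ×ˢ P, ‖f z.1 - f z.2‖ ^ 2 := by
      rw [Finset.sum_product]
    have hsub : S ×ˢ S ⊆ P ×ˢ P := Finset.product_subset_product hSP hSP
    have hsplit : ∑ z ∈ P ×ˢ P, ‖f z.1 - f z.2‖ ^ 2
        = ∑ z ∈ S ×ˢ S, ‖f z.1 - f z.2‖ ^ 2
          + ∑ z ∈ (P ×ˢ P) \ (S ×ˢ S), ‖f z.1 - f z.2‖ ^ 2 := by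
      rw [← Finset.sum_sdiff hsub]; ring
    have hSS : ∑ z ∈ S ×ˢ S, ‖f z.1 - f z.2‖ ^ 2 ≤ m * m * (4 * w ^ 2 * D ^ 2) := by
      have hbd : ∀ z ∈ S ×ˢ S, ‖f z.1 - f z.2‖ ^ 2 ≤ 4 * w ^ 2 * D ^ 2 := by
        rintro ⟨x, y⟩ hz
        rw [Finset.mem_product, hSdef] at hz
        have hx : ‖f x - f q‖ ≤ w * D := (mem_filter.mp hz.1).2
        have hy : ‖f y - f q‖ ≤ w * D := (mem_filter.mp hz.2).2
        have htri : ‖f x - f y‖ ≤ ‖f x - f q‖ + ‖f y - f q‖ := by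
          have h := norm_sub_le (f x - f q) (f y - f q)
          simpa [sub_sub_sub_cancel_right] using h
        nlinarith [norm_nonneg (f x - f y)]
      calc ∑ z ∈ S ×ˢ S, ‖f z.1 - f z.2‖ ^ 2
          ≤ (S ×ˢ S).card • (4 * w ^ 2 * D ^ 2) := Finset.sum_le_card_nsmul _ _ _ hbd
        _ = m * m * (4 * w ^ 2 * D ^ 2) := by
            rw [nsmul_eq_mul, Finset.card_product, hmdef]
            push_cast
            ring
    have hrest : ∑ z ∈ (P ×ˢ P) \ (S ×ˢ S), ‖f z.1 - f z.2‖ ^ 2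
        ≤ (n * n - m * m) * (B * D ^ 2) := by
      have hbd : ∀ z ∈ (P ×ˢ P) \ (S ×ˢ S), ‖f z.1 - f z.2‖ ^ 2 ≤ B * D ^ 2 := by
        rintro ⟨x, y⟩ hz
        have hz' : (x, y) ∈ P ×ˢ P := (Finset.mem_sdiff.mp hz).1
        rw [Finset.mem_product] at hz'
        have h1 : ‖f x - f y‖ ≤ D * dist x y := hLip x y
        have h2 : dist x y ≤ β * c := hdiam x hz'.1 y hz'.2
        have h3 : ‖f x - f y‖ ≤ D * (β * c) :=
          h1.trans (mul_le_mul_of_nonneg_left h2 hD.le)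
        have h4 : B * D ^ 2 = (D * (β * c)) ^ 2 := by rw [hBdef]; ring
        rw [h4]
        nlinarith [norm_nonneg (f x - f y)]
      calc ∑ z ∈ (P ×ˢ P) \ (S ×ˢ S), ‖f z.1 - f z.2‖ ^ 2
          ≤ ((P ×ˢ P) \ (S ×ˢ S)).card • (B * D ^ 2) :=
            Finset.sum_le_card_nsmul _ _ _ hbd
        _ = (n * n - m * m) * (B * D ^ 2) := by
            rw [nsmul_eq_mul, Finset.card_sdiff_of_subset hsub, Finset.card_product,
              Finset.card_product]
            have hle : S.card * S.card ≤ P.card * P.card :=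
              Nat.mul_le_mul (card_le_card hSP) (card_le_card hSP)
            rw [Nat.cast_sub hle, hndef, hmdef]
            push_cast
            ring
    rw [hrw, hsplit]
    linarith
  -- Combine
  have hcomb : A * D ^ 2 * n * n
      ≤ m * m * (4 * w ^ 2 * D ^ 2) + (n * n - m * m) * (B * D ^ 2) :=
    hlow.trans (hAvg.trans hup)
  have hD2 : (0:ℝ) < D ^ 2 := by positivity
  have h1 : A * (n * n) ≤ m * m * (4 * w ^ 2) + (n * n - m * m) * B := by
    have h1' : (A * (n * n)) * D ^ 2
        ≤ (m * m * (4 * w ^ 2) + (n * n - m * m) * B) * D ^ 2 := by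
      linear_combination hcomb
    exact le_of_mul_le_mul_right h1' hD2
  have hwmm : (m * m) * (16 * w ^ 2) ≤ (m * m) * A :=
    mul_le_mul_of_nonneg_left hwA (mul_nonneg hm0 hm0)
  have hkey : (4 * B - A) * (m * m) ≤ 4 * (B - A) * (n * n) := by linarith
  have h4BA : (0:ℝ) < 4 * B - A := by linarith
  have ha3 : A * (A * A) ≤ A * (B * B) :=
    mul_le_mul_of_nonneg_left (mul_self_le_mul_self hA.le hAB) hA.le
  have h64 : 64 * B ^ 2 * (B - A) ≤ (4 * B - A) ^ 3 := by
    nlinarith [ha3, mul_nonneg (mul_nonneg hB.le hA.le) hA.le,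
      mul_nonneg (mul_nonneg hB.le hB.le) hA.le]
  have hsq : (4 * B * m) ^ 2 ≤ ((4 * B - A) * n) ^ 2 := by
    have step1 : 16 * B ^ 2 * ((4 * B - A) * (m * m))
        ≤ 16 * B ^ 2 * (4 * (B - A) * (n * n)) :=
      mul_le_mul_of_nonneg_left hkey (by positivity)
    have step2 : 64 * B ^ 2 * (B - A) * (n * n) ≤ (4 * B - A) ^ 3 * (n * n) :=
      mul_le_mul_of_nonneg_right h64 (mul_nonneg hn0.le hn0.le)
    have h1' : (4 * B - A) * ((4 * B * m) ^ 2)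
        ≤ (4 * B - A) * (((4 * B - A) * n) ^ 2) := by nlinarith [step1, step2]
    exact le_of_mul_le_mul_left h1' h4BA
  have hmain : 4 * B * m ≤ (4 * B - A) * n := by
    have hx : (0:ℝ) ≤ 4 * B * m := by positivity
    have hy : (0:ℝ) ≤ (4 * B - A) * n := by positivity
    nlinarith [hsq, hx, hy]
  -- conclude
  have hgoal : (1 - A / (4 * B)) * n = ((4 * B - A) * n) / (4 * B) := by
    field_simp
  have hfinal : m ≤ (1 - A / (4 * B)) * n := by
    rw [hgoal, le_div_iff₀ (by positivity)]
    linarith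
  have heq : (1 - A / (4 * B)) * n
      = (1 - (1 - p) * lam ^ 2 / (4 * β ^ 2 * c ^ 2)) * n := by
    rw [hAdef, hBdef]; ring_nf
  rw [← hSdef, ← hmdef, ← hndef]
  linarith [heq ▸ hfinal]
end

section
/- Let (X, d) be a pseudometric space, H a real inner product space with norm ‖·‖, P a nonempty finite subset of X, q ∈ X, and f : X → H. Let D, w, λ, β, c > 0 and 0 ≤ p ≤ 1 be real numbers with β·c > 2·w. Assume: (i) ‖f(x) − f(y)‖ ≤ D·d(x, y) for all x, y ∈ X; (ii) Σ_{x,y ∈ P} ‖f(x) − f(y)‖² ≥ Σ_{x,y ∈ P} d(x, y)² (sums over ordered pairs); (iii) for every x ∈ P, the number of points y ∈ P with d(x, y) ≤ λ·D is at most p·|P|; (iv) d(x, y) ≤ β·c for all x, y ∈ P. Let α = |{x ∈ P : ‖f(x) − f(q)‖ ≤ w·D}| / |P|. Then α² ≤ (β²·c² − (1 − p)·λ²) / (β²·c² − 4·w²). -/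
open Finset

set_option maxHeartbeats 1000000 in
open scoped Classical in
/-- Quadratic bound: under the average-embedding, small-ball and diameter hypotheses,
with `β·c > 2·w`, the fraction `α` of points of `P` mapped within distance `w·D` of `f(q)`
satisfies `α² ≤ (β²·c² − (1 − p)·λ²)/(β²·c² − 4·w²)`. -/
theorem stmt_5 {X : Type*} [PseudoMetricSpace X] {H : Type*} [NormedAddCommGroup H]
    [InnerProductSpace ℝ H] (P : Finset X) (hP : P.Nonempty) (q : X) (f : X → H)
    (D w lam β c p : ℝ) (hD : 0 < D) (hw : 0 < w) (hlam : 0 < lam) (hβ : 0 < β)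
    (hc : 0 < c) (hp0 : 0 ≤ p) (hp1 : p ≤ 1) (hβcw : 2 * w < β * c)
    (hLip : ∀ x y : X, ‖f x - f y‖ ≤ D * dist x y)
    (hAvg : ∑ x ∈ P, ∑ y ∈ P, dist x y ^ 2 ≤ ∑ x ∈ P, ∑ y ∈ P, ‖f x - f y‖ ^ 2)
    (hball : ∀ x ∈ P, ((P.filter fun y => dist x y ≤ lam * D).card : ℝ) ≤ p * P.card)
    (hdiam : ∀ x ∈ P, ∀ y ∈ P, dist x y ≤ β * c)
    (α : ℝ) (hα : α = ((P.filter fun x => ‖f x - f q‖ ≤ w * D).card : ℝ) / P.card) :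
    α ^ 2 ≤ (β ^ 2 * c ^ 2 - (1 - p) * lam ^ 2) / (β ^ 2 * c ^ 2 - 4 * w ^ 2) := by
  set n : ℝ := (P.card : ℝ) with hn
  have hn0 : 0 < n := by
    rw [hn]; exact_mod_cast Finset.card_pos.mpr hP
  set S := P.filter (fun x => ‖f x - f q‖ ≤ w * D) with hS
  set s : ℝ := (S.card : ℝ) with hs
  -- lower bound on the distance sum
  have hlow : (1 - p) * n * (lam * D) ^ 2 * n ≤ ∑ x ∈ P, ∑ y ∈ P, dist x y ^ 2 := by
    have hmain : ∀ x ∈ P, (1 - p) * n * (lam * D) ^ 2 ≤ ∑ y ∈ P, dist x y ^ 2 := by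
      intro x hx
      set T := P.filter (fun y => ¬ dist x y ≤ lam * D) with hT
      have hcard : (P.filter fun y => dist x y ≤ lam * D).card + T.card = P.card :=
        Finset.card_filter_add_card_filter_not _
      have hcardR : ((P.filter fun y => dist x y ≤ lam * D).card : ℝ) + (T.card : ℝ) = n := by
        rw [hn]; exact_mod_cast hcard
      have hTcard : (1 - p) * n ≤ (T.card : ℝ) := by
        have h1 := hball x hx
        nlinarith [h1, hcardR]
      calc (1 - p) * n * (lam * D) ^ 2
          ≤ (T.card : ℝ) * (lam * D) ^ 2 :=
            mul_le_mul_of_nonneg_right hTcard (by positivity)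
        _ ≤ ∑ y ∈ T, dist x y ^ 2 := by
            have hb : ∀ y ∈ T, (lam * D) ^ 2 ≤ dist x y ^ 2 := by
              intro y hy
              rw [hT, Finset.mem_filter] at hy
              have hgt : lam * D < dist x y := lt_of_not_ge hy.2
              have hpos : 0 ≤ lam * D := by positivity
              nlinarith
            have := Finset.card_nsmul_le_sum T (fun y => dist x y ^ 2) ((lam * D) ^ 2) hb
            simpa [nsmul_eq_mul] using this
        _ ≤ ∑ y ∈ P, dist x y ^ 2 :=
            Finset.sum_le_sum_of_subset_of_nonneg (Finset.filter_subset _ _)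
              (by intro y _ _; positivity)
    calc (1 - p) * n * (lam * D) ^ 2 * n
        = ∑ _x ∈ P, (1 - p) * n * (lam * D) ^ 2 := by
          rw [Finset.sum_const, nsmul_eq_mul]; ring
      _ ≤ ∑ x ∈ P, ∑ y ∈ P, dist x y ^ 2 := Finset.sum_le_sum hmain
  -- upper bound on the embedded sum
  have hSsub : S ⊆ P := Finset.filter_subset _ _
  have hsub : S ×ˢ S ⊆ P ×ˢ P := Finset.product_subset_product hSsub hSsub
  have hsn : s ≤ n := by
    rw [hs, hn]; exact_mod_cast Finset.card_le_card hSsub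
  have hup : ∑ x ∈ P, ∑ y ∈ P, ‖f x - f y‖ ^ 2
      ≤ s * s * (2 * w * D) ^ 2 + (n * n - s * s) * (D * (β * c)) ^ 2 := by
    have hprod : ∑ x ∈ P, ∑ y ∈ P, ‖f x - f y‖ ^ 2
        = ∑ z ∈ P ×ˢ P, ‖f z.1 - f z.2‖ ^ 2 := by
      rw [Finset.sum_product]
    have hsplit : ∑ z ∈ P ×ˢ P, ‖f z.1 - f z.2‖ ^ 2
        = ∑ z ∈ S ×ˢ S, ‖f z.1 - f z.2‖ ^ 2
          + ∑ z ∈ (P ×ˢ P) \ (S ×ˢ S), ‖f z.1 - f z.2‖ ^ 2 := by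
      rw [add_comm, Finset.sum_sdiff hsub]
    have h1 : ∑ z ∈ S ×ˢ S, ‖f z.1 - f z.2‖ ^ 2 ≤ s * s * (2 * w * D) ^ 2 := by
      have hb : ∀ z ∈ S ×ˢ S, ‖f z.1 - f z.2‖ ^ 2 ≤ (2 * w * D) ^ 2 := by
        intro z hz
        rw [Finset.mem_product] at hz
        have hz1 := (Finset.mem_filter.mp (hS ▸ hz.1)).2
        have hz2 := (Finset.mem_filter.mp (hS ▸ hz.2)).2
        have hb' : ‖f z.1 - f z.2‖ ≤ 2 * w * D := by
          have h12 : f z.1 - f z.2 = (f z.1 - f q) + (f q - f z.2) := by abel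
          calc ‖f z.1 - f z.2‖ = ‖(f z.1 - f q) + (f q - f z.2)‖ := by rw [h12]
            _ ≤ ‖f z.1 - f q‖ + ‖f q - f z.2‖ := norm_add_le _ _
            _ = ‖f z.1 - f q‖ + ‖f z.2 - f q‖ := by rw [norm_sub_rev (f q)]
            _ ≤ w * D + w * D := add_le_add hz1 hz2
            _ = 2 * w * D := by ring
        exact pow_le_pow_left₀ (norm_nonneg _) hb' 2
      have := Finset.sum_le_card_nsmul (S ×ˢ S) _ ((2 * w * D) ^ 2) hb
      calc ∑ z ∈ S ×ˢ S, ‖f z.1 - f z.2‖ ^ 2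
          ≤ (S ×ˢ S).card • (2 * w * D) ^ 2 := this
        _ = s * s * (2 * w * D) ^ 2 := by
            rw [Finset.card_product, nsmul_eq_mul]; push_cast [hs]; ring
    have hdiffcard : (((P ×ˢ P) \ (S ×ˢ S)).card : ℝ) = n * n - s * s := by
      rw [Finset.card_sdiff_of_subset hsub]
      rw [Nat.cast_sub (Finset.card_le_card hsub)]
      rw [Finset.card_product, Finset.card_product]
      push_cast [hs, hn]
      ring
    have h2 : ∑ z ∈ (P ×ˢ P) \ (S ×ˢ S), ‖f z.1 - f z.2‖ ^ 2
        ≤ (n * n - s * s) * (D * (β * c)) ^ 2 := by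
      have hb : ∀ z ∈ (P ×ˢ P) \ (S ×ˢ S), ‖f z.1 - f z.2‖ ^ 2 ≤ (D * (β * c)) ^ 2 := by
        intro z hz
        have hzP := Finset.mem_sdiff.mp hz |>.1
        rw [Finset.mem_product] at hzP
        have hb' : ‖f z.1 - f z.2‖ ≤ D * (β * c) := by
          calc ‖f z.1 - f z.2‖ ≤ D * dist z.1 z.2 := hLip _ _
            _ ≤ D * (β * c) :=
              mul_le_mul_of_nonneg_left (hdiam _ hzP.1 _ hzP.2) hD.le
        exact pow_le_pow_left₀ (norm_nonneg _) hb' 2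
      have := Finset.sum_le_card_nsmul ((P ×ˢ P) \ (S ×ˢ S)) _ ((D * (β * c)) ^ 2) hb
      calc ∑ z ∈ (P ×ˢ P) \ (S ×ˢ S), ‖f z.1 - f z.2‖ ^ 2
          ≤ ((P ×ˢ P) \ (S ×ˢ S)).card • (D * (β * c)) ^ 2 := this
        _ = (n * n - s * s) * (D * (β * c)) ^ 2 := by
            rw [nsmul_eq_mul, hdiffcard]
      
    rw [hprod, hsplit]
    linarith
  have chain : (1 - p) * n * (lam * D) ^ 2 * n
      ≤ s * s * (2 * w * D) ^ 2 + (n * n - s * s) * (D * (β * c)) ^ 2 := by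
    linarith
  have key : (1 - p) * lam ^ 2 * (n * n)
      ≤ 4 * w ^ 2 * (s * s) + β ^ 2 * c ^ 2 * (n * n - s * s) := by
    nlinarith [chain, mul_pos hD hD, sq_nonneg D]
  have hdenom : 0 < β ^ 2 * c ^ 2 - 4 * w ^ 2 := by nlinarith [hβcw, hw]
  rw [hα]
  rw [div_pow, div_le_div_iff₀ (by positivity) hdenom]
  show s ^ 2 * _ ≤ _ * n ^ 2
  nlinarith [key]
end

section
/- Let p ≥ 2 be a real number and n a positive integer. For x ∈ ℝⁿ define h(x) ∈ ℝⁿ coordinatewise by h(x)_i = sign(x_i)·|x_i|^{p/2}. Then for all x, y ∈ ℝⁿ with ‖x‖_p = ‖y‖_p = 1, one has ‖h(x) − h(y)‖₂ ≤ (p/2)·‖x − y‖_p. -/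
open Finset

/-- The ℓ_p norm on ℝⁿ: `(∑ i, |x i| ^ p) ^ (1/p)`. -/
noncomputable def lpNorm (p : ℝ) {n : ℕ} (x : Fin n → ℝ) : ℝ :=
  (∑ i, |x i| ^ p) ^ (1 / p)

/-- The Euclidean (ℓ₂) norm on ℝⁿ. -/
noncomputable def l2Norm {n : ℕ} (x : Fin n → ℝ) : ℝ :=
  Real.sqrt (∑ i, (x i) ^ 2)

/-- The Mazur map from ℓ_p to ℓ₂: `h(x)_i = sign(x_i)·|x_i|^(p/2)`. -/
noncomputable def mazur (p : ℝ) {n : ℕ} (x : Fin n → ℝ) : Fin n → ℝ :=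
  fun i => Real.sign (x i) * |x i| ^ (p / 2)

section MazurAux
open Real


/-- Convex tangent bound: `x^s - y^s ≤ s x^(s-1) (x - y)` for `0 ≤ y ≤ x`, `1 ≤ s`. -/
lemma tangent_upper {s x y : ℝ} (hy : 0 ≤ y) (hxy : y ≤ x) (hs : 1 ≤ s) :
    x ^ s - y ^ s ≤ s * x ^ (s - 1) * (x - y) := by
  have hx : 0 ≤ x := hy.trans hxy
  rcases eq_or_lt_of_le hx with h | hx
  · have hx0 : x = 0 := h.symm
    have hy0 : y = 0 := le_antisymm (hx0 ▸ hxy) hy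
    simp [hx0, hy0, Real.zero_rpow (by positivity : s ≠ 0)]
  · have h1 : (-1 : ℝ) ≤ y / x - 1 := by
      have : 0 ≤ y / x := div_nonneg hy hx.le
      linarith
    have hb := one_add_mul_self_le_rpow_one_add h1 hs
    rw [add_sub_cancel] at hb
    -- hb : 1 + s * (y / x - 1) ≤ (y / x) ^ s
    have hxs : 0 < x ^ s := Real.rpow_pos_of_pos hx s
    have hdiv : (y / x) ^ s = y ^ s / x ^ s := Real.div_rpow hy hx.le s
    rw [hdiv] at hb
    have hb2 : x ^ s * (1 + s * (y / x - 1)) ≤ y ^ s := by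
      rw [mul_comm]
      calc (1 + s * (y / x - 1)) * x ^ s ≤ (y ^ s / x ^ s) * x ^ s :=
            mul_le_mul_of_nonneg_right hb hxs.le
        _ = y ^ s := div_mul_cancel₀ _ hxs.ne'
    have hpow : x ^ s = x ^ (s - 1) * x := by
      rw [← Real.rpow_add_one hx.ne' (s - 1), sub_add_cancel]
    have hxx : x ^ s * (y / x) = x ^ (s - 1) * y := by
      rw [hpow]; field_simp
    nlinarith [hb2, hxx]

/-- Concave tangent bound: `x^s ≤ m^s + s m^(s-1) (x - m)` for `m > 0`, `x ≥ 0`, `0 ≤ s ≤ 1`. -/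
lemma tangent_concave {s m x : ℝ} (hm : 0 < m) (hx : 0 ≤ x) (h0 : 0 ≤ s) (h1 : s ≤ 1) :
    x ^ s ≤ m ^ s + s * m ^ (s - 1) * (x - m) := by
  have h1' : (-1 : ℝ) ≤ x / m - 1 := by
    have : 0 ≤ x / m := div_nonneg hx hm.le
    linarith
  have hb := rpow_one_add_le_one_add_mul_self h1' h0 h1
  rw [add_sub_cancel] at hb
  -- hb : (x/m)^s ≤ 1 + s * (x/m - 1)
  have hms : 0 < m ^ s := Real.rpow_pos_of_pos hm s
  have hdiv : (x / m) ^ s = x ^ s / m ^ s := Real.div_rpow hx hm.le s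
  rw [hdiv] at hb
  have hb2 : x ^ s ≤ m ^ s * (1 + s * (x / m - 1)) := by
    calc x ^ s = (x ^ s / m ^ s) * m ^ s := (div_mul_cancel₀ _ hms.ne').symm
      _ ≤ (1 + s * (x / m - 1)) * m ^ s := mul_le_mul_of_nonneg_right hb hms.le
      _ = m ^ s * (1 + s * (x / m - 1)) := mul_comm _ _
  have hpow : m ^ s = m ^ (s - 1) * m := by
    rw [← Real.rpow_add_one hm.ne' (s - 1), sub_add_cancel]
  have hxx : m ^ s * (x / m) = m ^ (s - 1) * x := by
    rw [hpow]; field_simp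
  nlinarith [hb2, hxx]

/-- `2^t ≤ 1 + t` for `t ∈ [0,1]`. -/
lemma two_rpow_le_one_add {t : ℝ} (h0 : 0 ≤ t) (h1 : t ≤ 1) : (2 : ℝ) ^ t ≤ 1 + t := by
  have key := convexOn_exp.2 (Set.mem_univ (0 : ℝ)) (Set.mem_univ (Real.log 2))
    (by linarith : (0:ℝ) ≤ 1 - t) h0 (by ring)
  simp only [smul_eq_mul, mul_zero, zero_add, Real.exp_zero, mul_one] at key
  rw [Real.exp_log (by norm_num : (0:ℝ) < 2)] at key
  have : (2 : ℝ) ^ t = Real.exp (t * Real.log 2) := by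
    rw [Real.rpow_def_of_pos (by norm_num : (0:ℝ) < 2), mul_comm]
  rw [this]
  calc Real.exp (t * Real.log 2) ≤ (1 - t) + t * 2 := key
    _ = 1 + t := by ring

/-- `2^(1-1/q) ≤ q` for `q ≥ 1`. -/
lemma two_rpow_le_q {q : ℝ} (hq : 1 ≤ q) : (2 : ℝ) ^ (1 - 1/q) ≤ q := by
  have hq0 : 0 < q := by linarith
  have h0 : 0 ≤ 1 - 1/q := by
    have : 1/q ≤ 1 := by rw [div_le_one hq0]; exact hq
    linarith
  have h1 : 1 - 1/q ≤ 1 := by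
    have : 0 < 1/q := by positivity
    linarith
  calc (2:ℝ) ^ (1 - 1/q) ≤ 1 + (1 - 1/q) := two_rpow_le_one_add h0 h1
    _ = 2 - 1/q := by ring
    _ ≤ q := by
        have hid : q + 1/q - 2 = (q-1)^2/q := by field_simp; ring
        have hnn : 0 ≤ (q-1)^2/q := by positivity
        linarith

/-- Two-point Jensen for rpow: `((u+v)/2)^t ≤ (u^t + v^t)/2` for `u,v ≥ 0`, `t ≥ 1`. -/
lemma two_pt_jensen {u v t : ℝ} (hu : 0 ≤ u) (hv : 0 ≤ v) (ht : 1 ≤ t) :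
    ((u + v) / 2) ^ t ≤ (u ^ t + v ^ t) / 2 := by
  have h := Real.rpow_arith_mean_le_arith_mean_rpow (Finset.univ : Finset (Fin 2))
    ![1/2, 1/2] ![u, v] (by intro i _; fin_cases i <;> norm_num)
    (by simp [Fin.sum_univ_two]; norm_num) (by intro i _; fin_cases i <;> assumption) ht
  simp only [Fin.sum_univ_two, Matrix.cons_val_zero, Matrix.cons_val_one, Matrix.head_cons] at h
  calc ((u + v) / 2) ^ t = (1/2 * u + 1/2 * v) ^ t := by rw [show (u+v)/2 = 1/2*u + 1/2*v from by ring]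
    _ ≤ 1/2 * u ^ t + 1/2 * v ^ t := h
    _ = (u ^ t + v ^ t)/2 := by ring

/-- Real version of `a^q + b^q ≤ (a+b)^q` for `a,b ≥ 0`, `q ≥ 1`. -/
lemma real_add_rpow {a b q : ℝ} (ha : 0 ≤ a) (hb : 0 ≤ b) (hq : 1 ≤ q) :
    a ^ q + b ^ q ≤ (a + b) ^ q := by
  have h := NNReal.add_rpow_le_rpow_add (a.toNNReal) (b.toNNReal) hq
  have h2 := NNReal.coe_le_coe.2 h
  push_cast at h2
  rwa [Real.coe_toNNReal a ha, Real.coe_toNNReal b hb] at h2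


/-- Case `1 ≤ q ≤ 2`: `a^q - b^q ≤ q (a-b) ((a+b)/2)^(q-1)` for `0 ≤ b ≤ a`. -/
lemma lemA1 {q a b : ℝ} (hq : 1 ≤ q) (hq2 : q ≤ 2) (hb : 0 ≤ b) (hba : b ≤ a) :
    a ^ q - b ^ q ≤ q * (a - b) * ((a + b) / 2) ^ (q - 1) := by
  have hqne : q ≠ 0 := by linarith
  rcases hb.eq_or_lt with hb0 | hbpos
  · -- b = 0
    have hb0' : b = 0 := hb0.symm
    subst hb0'
    rw [Real.zero_rpow hqne, sub_zero, sub_zero, add_zero]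
    rcases (hb.trans hba).eq_or_lt with ha0 | hapos
    · rw [← ha0, Real.zero_rpow hqne]
      have : ((0:ℝ)/2) ^ (q-1) = 0 ^ (q-1) := by norm_num
      nlinarith [Real.rpow_nonneg (le_refl (0:ℝ)) (q-1)]
    · have h2q : (2:ℝ) ^ (q-1) ≤ q := by
        have := two_rpow_le_one_add (by linarith : (0:ℝ) ≤ q - 1) (by linarith : q - 1 ≤ 1)
        linarith
      have e1 : (a/2) ^ (q-1) = a^(q-1) / 2^(q-1) := Real.div_rpow hapos.le (by norm_num) (q-1)
      have e2 : a * a ^ (q-1) = a ^ q := by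
        rw [mul_comm, ← Real.rpow_add_one hapos.ne' (q-1), sub_add_cancel]
      rw [e1]
      have h2pos : (0:ℝ) < 2 ^ (q-1) := Real.rpow_pos_of_pos (by norm_num) _
      have haq : (0:ℝ) < a ^ q := Real.rpow_pos_of_pos hapos q
      rw [mul_div_assoc' , le_div_iff₀ h2pos]
      calc a ^ q * 2 ^ (q-1) ≤ a ^ q * q := by nlinarith
        _ = q * a * a ^ (q-1) := by rw [← e2]; ring
  · -- b > 0
    set f : ℝ → ℝ := fun z => q * (z - b) * ((z + b) / 2) ^ (q - 1) - z ^ q + b ^ q with hf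
    have hder : ∀ z ∈ Set.Ici b, HasDerivAt f
        (q * ((z + b) / 2) ^ (q - 1)
          + q * (z - b) * ((q - 1) * ((z + b) / 2) ^ (q - 1 - 1) * (1 / 2))
          - q * z ^ (q - 1)) z := by
      intro z hz
      have hzb : b ≤ z := hz
      have hzpos : 0 < z := lt_of_lt_of_le hbpos hzb
      have hmid : (0:ℝ) < (z + b) / 2 := by linarith
      have h1 : HasDerivAt (fun w : ℝ => (w + b) / 2) (1 / 2) z := by
        simpa using ((hasDerivAt_id z).add_const b).div_const 2
      have h2 : HasDerivAt (fun w : ℝ => ((w + b) / 2) ^ (q - 1))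
          ((q - 1) * ((z + b) / 2) ^ (q - 1 - 1) * (1 / 2)) z := by
        have := (Real.hasDerivAt_rpow_const (p := q - 1) (Or.inl hmid.ne')).comp z h1
        exact this
      have h3 : HasDerivAt (fun w : ℝ => q * (w - b)) q z := by
        simpa using ((hasDerivAt_id z).sub_const b).const_mul q
      have h4 : HasDerivAt (fun w : ℝ => w ^ q) (q * z ^ (q - 1)) z :=
        Real.hasDerivAt_rpow_const (Or.inl hzpos.ne')
      have h6 := ((h3.mul h2).sub h4).add_const (b ^ q)
      exact h6
    have hmono : MonotoneOn f (Set.Ici b) := by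
      apply monotoneOn_of_deriv_nonneg (convex_Ici b)
      · exact fun z hz => (hder z hz).continuousAt.continuousWithinAt
      · intro z hz
        rw [interior_Ici] at hz
        exact (hder z (Set.mem_Ici.mpr (le_of_lt (Set.mem_Ioi.mp hz)))).differentiableAt.differentiableWithinAt
      · intro z hz
        rw [interior_Ici] at hz
        have hzb : b < z := hz
        have hzpos : 0 < z := hbpos.trans hzb
        have hmid : (0:ℝ) < (z + b) / 2 := by linarith
        rw [(hder z (le_of_lt hzb)).deriv]
        have htc := tangent_concave (s := q - 1) (m := (z+b)/2) (x := z) hmid hzpos.le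
          (by linarith) (by linarith)
        have hq0 : (0:ℝ) ≤ q := by linarith
        have e1 : z - (z + b) / 2 = (z - b) / 2 := by ring
        rw [e1] at htc
        have := mul_le_mul_of_nonneg_left htc hq0
        nlinarith [this]
    have hfb : f b = 0 := by simp [hf]
    have hfa := hmono Set.self_mem_Ici (Set.mem_Ici.mpr hba) hba
    rw [hfb] at hfa
    simp only [hf] at hfa
    linarith

/-- Case `2 ≤ q`: `a^q - b^q ≤ q (a-b) (a^(q-1)+b^(q-1))/2` for `0 ≤ b ≤ a`. -/
lemma lemA2 {q a b : ℝ} (hq2 : 2 ≤ q) (hb : 0 ≤ b) (hba : b ≤ a) :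
    a ^ q - b ^ q ≤ q * (a - b) * ((a ^ (q-1) + b ^ (q-1)) / 2) := by
  have hq : 1 ≤ q := by linarith
  have hqne : q ≠ 0 := by linarith
  rcases hb.eq_or_lt with hb0 | hbpos
  · have hb0' : b = 0 := hb0.symm
    subst hb0'
    rw [Real.zero_rpow hqne, Real.zero_rpow (by linarith : q - 1 ≠ 0), sub_zero, sub_zero, add_zero]
    rcases (hb.trans hba).eq_or_lt with ha0 | hapos
    · rw [← ha0, Real.zero_rpow hqne]
      nlinarith [Real.rpow_nonneg (le_refl (0:ℝ)) (q-1)]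
    · have e2 : a * a ^ (q-1) = a ^ q := by
        rw [mul_comm, ← Real.rpow_add_one hapos.ne' (q-1), sub_add_cancel]
      have haq : (0:ℝ) < a ^ q := Real.rpow_pos_of_pos hapos q
      calc a ^ q ≤ (q/2) * a ^ q := by nlinarith
        _ = q * a * (a ^ (q-1) / 2) := by rw [← e2]; ring
  · set f : ℝ → ℝ := fun z => q * (z - b) * ((z ^ (q-1) + b ^ (q-1)) / 2) - z ^ q + b ^ q with hf
    have hder : ∀ z ∈ Set.Ici b, HasDerivAt f
        (q * ((z ^ (q-1) + b ^ (q-1)) / 2)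
          + q * (z - b) * ((q - 1) * z ^ (q - 1 - 1) / 2)
          - q * z ^ (q - 1)) z := by
      intro z hz
      have hzb : b ≤ z := hz
      have hzpos : 0 < z := lt_of_lt_of_le hbpos hzb
      have h2 : HasDerivAt (fun w : ℝ => (w ^ (q-1) + b ^ (q-1)) / 2)
          ((q - 1) * z ^ (q - 1 - 1) / 2) z := by
        have h := Real.hasDerivAt_rpow_const (x := z) (p := q - 1) (Or.inl hzpos.ne')
        exact (h.add_const (b ^ (q-1))).div_const 2
      have h3 : HasDerivAt (fun w : ℝ => q * (w - b)) q z := by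
        simpa using ((hasDerivAt_id z).sub_const b).const_mul q
      have h4 : HasDerivAt (fun w : ℝ => w ^ q) (q * z ^ (q - 1)) z :=
        Real.hasDerivAt_rpow_const (Or.inl hzpos.ne')
      have h6 := ((h3.mul h2).sub h4).add_const (b ^ q)
      exact h6
    have hmono : MonotoneOn f (Set.Ici b) := by
      apply monotoneOn_of_deriv_nonneg (convex_Ici b)
      · exact fun z hz => (hder z hz).continuousAt.continuousWithinAt
      · intro z hz
        rw [interior_Ici] at hz
        exact (hder z (Set.mem_Ici.mpr (le_of_lt (Set.mem_Ioi.mp hz)))).differentiableAt.differentiableWithinAt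
      · intro z hz
        rw [interior_Ici] at hz
        have hzb : b < z := hz
        have hzpos : 0 < z := hbpos.trans hzb
        rw [(hder z (le_of_lt hzb)).deriv]
        have htu := tangent_upper (s := q - 1) (x := z) (y := b) hb hzb.le (by linarith)
        have hq0 : (0:ℝ) ≤ q := by linarith
        have := mul_le_mul_of_nonneg_left htu hq0
        nlinarith [this]
    have hfb : f b = 0 := by simp [hf]
    have hfa := hmono Set.self_mem_Ici (Set.mem_Ici.mpr hba) hba
    rw [hfb] at hfa
    simp only [hf] at hfa
    linarith


/-- Same-sign lemma: `a^q - b^q ≤ q (a-b) W^((q-1)/(2q))`, `W = (a^(2q)+b^(2q))/2`. -/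
lemma lemA {q a b : ℝ} (hq : 1 ≤ q) (hb : 0 ≤ b) (hba : b ≤ a) :
    a ^ q - b ^ q ≤ q * (a - b) * (((a ^ (2*q) + b ^ (2*q)) / 2) ^ ((q-1)/(2*q))) := by
  have ha : 0 ≤ a := hb.trans hba
  have hq0 : (0:ℝ) < q := by linarith
  have hqne : q ≠ 0 := hq0.ne'
  have he : (0:ℝ) ≤ (q-1)/(2*q) := div_nonneg (by linarith) (by linarith)
  have hW : (0:ℝ) ≤ (a ^ (2*q) + b ^ (2*q)) / 2 := by positivity
  have hqab : 0 ≤ q * (a - b) := by nlinarith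
  rcases le_total q 2 with hq2 | hq2
  · refine (lemA1 hq hq2 hb hba).trans ?_
    apply mul_le_mul_of_nonneg_left ?_ hqab
    have hj := two_pt_jensen ha hb (by linarith : (1:ℝ) ≤ 2*q)
    have hbase : (0:ℝ) ≤ (a + b) / 2 := by positivity
    have h1 : (((a+b)/2) ^ (2*q)) ^ ((q-1)/(2*q)) ≤ ((a ^ (2*q) + b ^ (2*q)) / 2) ^ ((q-1)/(2*q)) :=
      Real.rpow_le_rpow (Real.rpow_nonneg hbase _) hj he
    calc ((a+b)/2) ^ (q-1) = ((a+b)/2) ^ (2*q*((q-1)/(2*q))) := by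
          congr 1; field_simp
      _ = (((a+b)/2) ^ (2*q)) ^ ((q-1)/(2*q)) := Real.rpow_mul hbase _ _
      _ ≤ _ := h1
  · refine (lemA2 hq2 hb hba).trans ?_
    apply mul_le_mul_of_nonneg_left ?_ hqab
    have hq1 : (0:ℝ) < q - 1 := by linarith
    set t : ℝ := 2*q/(q-1) with ht
    have ht1 : 1 ≤ t := by
      rw [ht, le_div_iff₀ hq1]; linarith
    have hj := two_pt_jensen (Real.rpow_nonneg ha (q-1)) (Real.rpow_nonneg hb (q-1)) ht1
    have e1 : (a ^ (q-1)) ^ t = a ^ (2*q) := by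
      rw [← Real.rpow_mul ha, ht, mul_comm (q-1), div_mul_cancel₀ _ hq1.ne']
    have e2 : (b ^ (q-1)) ^ t = b ^ (2*q) := by
      rw [← Real.rpow_mul hb, ht, mul_comm (q-1), div_mul_cancel₀ _ hq1.ne']
    rw [e1, e2] at hj
    have hbase : (0:ℝ) ≤ (a ^ (q-1) + b ^ (q-1)) / 2 := by positivity
    have h1 : (((a ^ (q-1) + b ^ (q-1)) / 2) ^ t) ^ ((q-1)/(2*q)) ≤
        ((a ^ (2*q) + b ^ (2*q)) / 2) ^ ((q-1)/(2*q)) :=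
      Real.rpow_le_rpow (Real.rpow_nonneg hbase _) hj he
    calc (a ^ (q-1) + b ^ (q-1)) / 2
        = ((a ^ (q-1) + b ^ (q-1)) / 2) ^ (t * ((q-1)/(2*q))) := by
          rw [show t * ((q-1)/(2*q)) = 1 by rw [ht]; field_simp, Real.rpow_one]
      _ = (((a ^ (q-1) + b ^ (q-1)) / 2) ^ t) ^ ((q-1)/(2*q)) := Real.rpow_mul hbase _ _
      _ ≤ _ := h1

/-- Opposite-sign lemma: `a^q + c^q ≤ q (a+c) W^((q-1)/(2q))`. -/
lemma lemB {q a c : ℝ} (hq : 1 ≤ q) (ha : 0 ≤ a) (hc : 0 ≤ c) :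
    a ^ q + c ^ q ≤ q * (a + c) * (((a ^ (2*q) + c ^ (2*q)) / 2) ^ ((q-1)/(2*q))) := by
  have hq0 : (0:ℝ) < q := by linarith
  have hqne : q ≠ 0 := hq0.ne'
  have he : (0:ℝ) ≤ (q-1)/(2*q) := div_nonneg (by linarith) (by linarith)
  set A : ℝ := (a ^ q + c ^ q) / 2 with hA
  have hA0 : 0 ≤ A := by positivity
  rcases hA0.eq_or_lt with hA00 | hApos
  · have h0 : a ^ q + c ^ q = 0 := by
      have h := hA00.symm
      rw [hA] at h
      linarith
    rw [h0]
    have : (0:ℝ) ≤ q * (a + c) := by positivity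
    positivity
  · have hW : (0:ℝ) ≤ (a ^ (2*q) + c ^ (2*q)) / 2 := by positivity
    have hsq : A ^ (2:ℝ) ≤ (a ^ (2*q) + c ^ (2*q)) / 2 := by
      have hj := two_pt_jensen (Real.rpow_nonneg ha q) (Real.rpow_nonneg hc q)
        (by norm_num : (1:ℝ) ≤ 2)
      have e1 : (a ^ q) ^ (2:ℝ) = a ^ (2*q) := by
        rw [← Real.rpow_mul ha, mul_comm]
      have e2 : (c ^ q) ^ (2:ℝ) = c ^ (2*q) := by
        rw [← Real.rpow_mul hc, mul_comm]
      rw [e1, e2] at hj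
      exact hj
    have hc1 : A ^ ((q-1)/q) ≤ ((a ^ (2*q) + c ^ (2*q)) / 2) ^ ((q-1)/(2*q)) := by
      have h1 : (A ^ (2:ℝ)) ^ ((q-1)/(2*q)) ≤ ((a ^ (2*q) + c ^ (2*q)) / 2) ^ ((q-1)/(2*q)) :=
        Real.rpow_le_rpow (Real.rpow_nonneg hA0 _) hsq he
      calc A ^ ((q-1)/q) = A ^ ((2:ℝ) * ((q-1)/(2*q))) := by
            congr 1; field_simp
        _ = (A ^ (2:ℝ)) ^ ((q-1)/(2*q)) := Real.rpow_mul hA0 _ _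
        _ ≤ _ := h1
    have hac : (0:ℝ) ≤ a + c := by linarith
    have hA1 : A ^ (1/q) * 2 ^ (1/q) ≤ a + c := by
      have hsub : A * 2 ≤ (a + c) ^ q := by
        rw [hA, div_mul_cancel₀ _ (two_ne_zero)]
        exact real_add_rpow ha hc hq
      have hmul : (A * 2) ^ (1/q) ≤ ((a+c) ^ q) ^ (1/q) :=
        Real.rpow_le_rpow (by positivity) hsub (by positivity)
      rw [Real.mul_rpow hA0 (by norm_num : (0:ℝ) ≤ 2)] at hmul
      rw [one_div, Real.rpow_rpow_inv hac hqne] at hmul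
      simpa [one_div] using hmul
    have hc2 : 2 * A ^ (1/q) ≤ q * (a + c) := by
      have h2pos : (0:ℝ) < 2 ^ ((1:ℝ) - 1/q) := Real.rpow_pos_of_pos two_pos _
      have hkey : (2:ℝ) ^ ((1:ℝ) - 1/q) * 2 ^ ((1:ℝ)/q) = 2 := by
        rw [← Real.rpow_add two_pos]
        norm_num
      have step := mul_le_mul_of_nonneg_left hA1 h2pos.le
      have lhs_eq : (2:ℝ) ^ ((1:ℝ) - 1/q) * (A ^ (1/q) * 2 ^ (1/q)) = 2 * A ^ (1/q) := by
        rw [show (2:ℝ) ^ ((1:ℝ) - 1/q) * (A ^ (1/q) * 2 ^ (1/q))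
            = ((2:ℝ) ^ ((1:ℝ) - 1/q) * 2 ^ ((1:ℝ)/q)) * A ^ (1/q) from by ring, hkey]
      rw [lhs_eq] at step
      calc 2 * A ^ (1/q) ≤ 2 ^ ((1:ℝ) - 1/q) * (a + c) := step
        _ ≤ q * (a + c) := mul_le_mul_of_nonneg_right (two_rpow_le_q hq) hac
    have hsplit : 2 * A = (2 * A ^ (1/q)) * A ^ ((q-1)/q) := by
      rw [mul_assoc, ← Real.rpow_add hApos]
      rw [show 1/q + (q-1)/q = 1 from by field_simp; ring, Real.rpow_one]
    rw [show a ^ q + c ^ q = 2 * A from by rw [hA]; ring, hsplit]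
    exact mul_le_mul hc2 hc1 (Real.rpow_nonneg hA0 _) (by positivity)


lemma sign_rpow_of_nonneg {q u : ℝ} (hq : 1 ≤ q) (hu : 0 ≤ u) :
    Real.sign u * |u| ^ q = u ^ q := by
  rcases hu.eq_or_lt with h | h
  · rw [← h, Real.sign_zero, abs_zero, Real.zero_rpow (by linarith : q ≠ 0)]
    ring
  · rw [Real.sign_of_pos h, abs_of_pos h, one_mul]

/-- Master scalar inequality, unsquared, for `0 ≤ a`. -/
lemma master_nonneg {q : ℝ} (hq : 1 ≤ q) (a b : ℝ) (ha : 0 ≤ a) :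
    |Real.sign a * |a| ^ q - Real.sign b * |b| ^ q| ≤
      q * |a - b| * (((|a| ^ (2*q) + |b| ^ (2*q)) / 2) ^ ((q-1)/(2*q))) := by
  have hq0 : (0:ℝ) < q := by linarith
  rw [sign_rpow_of_nonneg hq ha, abs_of_nonneg ha]
  rcases le_or_gt 0 b with hb | hb
  · rw [sign_rpow_of_nonneg hq hb, abs_of_nonneg hb]
    rcases le_total b a with hba | hab
    · have hnn : 0 ≤ a ^ q - b ^ q :=
        sub_nonneg.mpr (Real.rpow_le_rpow hb hba hq0.le)
      rw [abs_of_nonneg hnn, abs_of_nonneg (sub_nonneg.mpr hba)]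
      exact lemA hq hb hba
    · have hnn : a ^ q - b ^ q ≤ 0 :=
        sub_nonpos.mpr (Real.rpow_le_rpow ha hab hq0.le)
      rw [abs_of_nonpos hnn, abs_of_nonpos (sub_nonpos.mpr hab), neg_sub, neg_sub]
      have h := lemA hq ha hab
      rw [add_comm (b ^ (2*q))] at h
      exact h
  · rw [Real.sign_of_neg hb, abs_of_neg hb]
    have hnb : 0 ≤ -b := by linarith
    have hnn : 0 ≤ a ^ q + (-b) ^ q := by
      have := Real.rpow_nonneg ha q
      have := Real.rpow_nonneg hnb q
      linarith
    have e1 : a ^ q - -1 * (-b) ^ q = a ^ q + (-b) ^ q := by ring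
    rw [e1, abs_of_nonneg hnn, abs_of_nonneg (by linarith : (0:ℝ) ≤ a - b)]
    have h := lemB hq ha hnb
    rw [show a + -b = a - b from by ring] at h
    exact h

/-- Master scalar inequality, unsquared, all real `a b`. -/
lemma master {q : ℝ} (hq : 1 ≤ q) (a b : ℝ) :
    |Real.sign a * |a| ^ q - Real.sign b * |b| ^ q| ≤
      q * |a - b| * (((|a| ^ (2*q) + |b| ^ (2*q)) / 2) ^ ((q-1)/(2*q))) := by
  rcases le_or_gt 0 a with ha | ha
  · exact master_nonneg hq a b ha
  · have h := master_nonneg hq (-a) (-b) (by linarith)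
    rw [Real.sign_neg, Real.sign_neg, abs_neg, abs_neg] at h
    have e1 : -Real.sign a * |a| ^ q - -Real.sign b * |b| ^ q
        = -(Real.sign a * |a| ^ q - Real.sign b * |b| ^ q) := by ring
    have e2 : -a - -b = -(a - b) := by ring
    rw [e1, e2, abs_neg, abs_neg] at h
    exact h

/-- Squared scalar inequality. -/
lemma scalar {q : ℝ} (hq : 1 ≤ q) (a b : ℝ) :
    (Real.sign a * |a| ^ q - Real.sign b * |b| ^ q) ^ 2 ≤
      q ^ 2 * (((|a| ^ (2*q) + |b| ^ (2*q)) / 2) ^ ((q-1)/q)) * (a - b) ^ 2 := by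
  have h := master hq a b
  set X := Real.sign a * |a| ^ q - Real.sign b * |b| ^ q with hX
  set V := (|a| ^ (2*q) + |b| ^ (2*q)) / 2 with hV
  have hV0 : 0 ≤ V := by positivity
  have hsq := mul_self_le_mul_self (abs_nonneg X) h
  rw [abs_mul_abs_self] at hsq
  have hVe : V ^ ((q-1)/(2*q)) * V ^ ((q-1)/(2*q)) = V ^ ((q-1)/q) := by
    rcases eq_or_lt_of_le hq with h1 | h1
    · rw [← h1]; norm_num
    · rw [← Real.rpow_add' hV0 (by
        have : (q-1)/(2*q) + (q-1)/(2*q) = (q-1)/q := by field_simp; ring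
        rw [this]
        exact ne_of_gt (div_pos (by linarith) (by linarith)))]
      congr 1
      field_simp; ring
  calc X ^ 2 = X * X := sq X
    _ ≤ (q * |a - b| * V ^ ((q-1)/(2*q))) * (q * |a - b| * V ^ ((q-1)/(2*q))) := hsq
    _ = q ^ 2 * (V ^ ((q-1)/(2*q)) * V ^ ((q-1)/(2*q))) * (|a - b| * |a - b|) := by ring
    _ = q ^ 2 * V ^ ((q-1)/q) * (a - b) ^ 2 := by
        rw [hVe, abs_mul_abs_self, sq (a-b)]

end MazurAux

open Real in





lemma sign_mul_abs_real (u : ℝ) : Real.sign u * |u| = u := by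
  rcases lt_trichotomy u 0 with h | h | h
  · rw [Real.sign_of_neg h, abs_of_neg h]; ring
  · simp [h]
  · rw [Real.sign_of_pos h, abs_of_pos h, one_mul]

lemma sq_rpow_half (p z : ℝ) (hp : 0 < p) : ((z ^ 2 : ℝ)) ^ (p/2) = |z| ^ p := by
  rw [← sq_abs, ← Real.rpow_two, ← Real.rpow_mul (abs_nonneg z),
    show (2:ℝ) * (p/2) = p from by ring]

/-- The Mazur map is `(p/2)`-Lipschitz on the unit sphere of `ℓ_pⁿ`. -/
theorem stmt_8 (p : ℝ) (hp : 2 ≤ p) (n : ℕ) (hn : 0 < n) (x y : Fin n → ℝ)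
    (hx : lpNorm p x = 1) (hy : lpNorm p y = 1) :
    l2Norm (mazur p x - mazur p y) ≤ (p / 2) * lpNorm p (x - y) := by
  have hp0 : (0:ℝ) < p := by linarith
  have hpne : p ≠ 0 := hp0.ne'
  rcases eq_or_lt_of_le hp with hp2 | hp2
  · -- p = 2
    have hp2' : p = 2 := hp2.symm
    subst hp2'
    have hm : mazur 2 x - mazur 2 y = x - y := by
      funext i
      simp only [Pi.sub_apply, mazur]
      norm_num [Real.rpow_one, sign_mul_abs_real]
    rw [hm]
    have : l2Norm (x - y) = lpNorm 2 (x - y) := by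
      simp only [l2Norm, lpNorm]
      rw [Real.sqrt_eq_rpow]
      congr 1
      · apply Finset.sum_congr rfl
        intro i _
        rw [show ((2:ℝ)) = ((2:ℕ):ℝ) from by norm_num, Real.rpow_natCast, sq_abs]
    rw [this]
    norm_num
  · -- p > 2
    set q : ℝ := p / 2 with hqdef
    have hq : 1 ≤ q := by rw [hqdef]; linarith
    have hq1 : 1 < q := by rw [hqdef]; linarith
    have hq0 : (0:ℝ) < q := by linarith
    -- unit norm sums
    have hxs : ∑ i, |x i| ^ p = 1 := by
      have h0 : (0:ℝ) ≤ ∑ i, |x i| ^ p :=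
        Finset.sum_nonneg fun i _ => Real.rpow_nonneg (abs_nonneg _) p
      have h1 : ((∑ i, |x i| ^ p) ^ (1/p : ℝ)) ^ p = (1:ℝ) ^ p := by
        rw [show (∑ i, |x i| ^ p) ^ (1/p : ℝ) = lpNorm p x from rfl, hx]
      rwa [one_div, Real.rpow_inv_rpow h0 hpne, Real.one_rpow] at h1
    have hys : ∑ i, |y i| ^ p = 1 := by
      have h0 : (0:ℝ) ≤ ∑ i, |y i| ^ p :=
        Finset.sum_nonneg fun i _ => Real.rpow_nonneg (abs_nonneg _) p
      have h1 : ((∑ i, |y i| ^ p) ^ (1/p : ℝ)) ^ p = (1:ℝ) ^ p := by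
        rw [show (∑ i, |y i| ^ p) ^ (1/p : ℝ) = lpNorm p y from rfl, hy]
      rwa [one_div, Real.rpow_inv_rpow h0 hpne, Real.one_rpow] at h1
    set c : Fin n → ℝ := fun i => ((|x i| ^ p + |y i| ^ p) / 2) ^ ((p-2)/p) with hc
    set d : Fin n → ℝ := fun i => (x i - y i) ^ 2 with hd
    have hcnn : ∀ i, 0 ≤ c i := fun i => Real.rpow_nonneg (by positivity) _
    have hdnn : ∀ i, 0 ≤ d i := fun i => sq_nonneg _
    -- pointwise bound
    have hpt : ∀ i, ((mazur p x - mazur p y) i) ^ 2 ≤ q ^ 2 * (c i * d i) := by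
      intro i
      have h := scalar hq (x i) (y i)
      rw [show 2 * q = p from by rw [hqdef]; ring] at h
      rw [show (q - 1)/q = (p-2)/p from by rw [hqdef]; field_simp] at h
      simp only [Pi.sub_apply, mazur, hc, hd]
      calc (Real.sign (x i) * |x i| ^ (p/2) - Real.sign (y i) * |y i| ^ (p/2)) ^ 2
          ≤ q ^ 2 * (((|x i| ^ p + |y i| ^ p) / 2) ^ ((p-2)/p)) * (x i - y i) ^ 2 := h
        _ = q ^ 2 * ((((|x i| ^ p + |y i| ^ p) / 2) ^ ((p-2)/p)) * (x i - y i) ^ 2) := by ring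
    -- sum up
    have hsum : ∑ i, ((mazur p x - mazur p y) i) ^ 2 ≤ q ^ 2 * ∑ i, c i * d i := by
      rw [Finset.mul_sum]
      exact Finset.sum_le_sum fun i _ => hpt i
    -- Hölder
    have hconj : (p/(p-2)).HolderConjugate (p/2) := by
      rw [Real.holderConjugate_iff]; constructor
      · rw [lt_div_iff₀ (by linarith : (0:ℝ) < p - 2)]; linarith
      · rw [show (p/(p-2))⁻¹ = (p-2)/p from by rw [inv_div],
            show (p/2)⁻¹ = 2/p from by rw [inv_div]]
        field_simp; ring
    have hold := Real.inner_le_Lp_mul_Lq Finset.univ c d hconj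
    -- simplify the two factors
    have hfac1 : (∑ i, |c i| ^ (p/(p-2))) ^ (1/(p/(p-2))) = 1 := by
      have : ∀ i : Fin n, |c i| ^ (p/(p-2)) = (|x i| ^ p + |y i| ^ p) / 2 := by
        intro i
        rw [abs_of_nonneg (hcnn i), hc]
        rw [← Real.rpow_mul (by positivity)]
        rw [show (p-2)/p * (p/(p-2)) = 1 from by
          field_simp [sub_ne_zero.mpr hp2.ne']]
        exact Real.rpow_one _
      rw [Finset.sum_congr rfl fun i _ => this i]
      rw [← Finset.sum_div, Finset.sum_add_distrib, hxs, hys]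
      norm_num
    have hfac2 : (∑ i, |d i| ^ (p/2)) ^ (1/(p/2)) = (lpNorm p (x - y)) ^ 2 := by
      have : ∀ i : Fin n, |d i| ^ (p/2) = |x i - y i| ^ p := by
        intro i
        rw [abs_of_nonneg (hdnn i), hd]
        exact sq_rpow_half p _ hp0
      rw [Finset.sum_congr rfl fun i _ => this i]
      have h0 : (0:ℝ) ≤ ∑ i, |x i - y i| ^ p :=
        Finset.sum_nonneg fun i _ => Real.rpow_nonneg (abs_nonneg _) p
      rw [one_div_div]
      rw [show (2:ℝ)/p = 1/p * 2 from by ring, Real.rpow_mul h0]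
      rw [show (∑ i, |x i - y i| ^ p) ^ (1/p : ℝ) = lpNorm p (x - y) from by
        simp only [lpNorm, Pi.sub_apply]]
      rw [Real.rpow_two]
    have hL : 0 ≤ lpNorm p (x - y) := by
      apply Real.rpow_nonneg
      exact Finset.sum_nonneg fun i _ => Real.rpow_nonneg (abs_nonneg _) p
    have htotal : ∑ i, ((mazur p x - mazur p y) i) ^ 2 ≤ q ^ 2 * (lpNorm p (x - y)) ^ 2 := by
      calc ∑ i, ((mazur p x - mazur p y) i) ^ 2 ≤ q ^ 2 * ∑ i, c i * d i := hsum
        _ ≤ q ^ 2 * (1 * (lpNorm p (x - y)) ^ 2) := by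
            apply mul_le_mul_of_nonneg_left _ (by positivity)
            rw [← hfac1, ← hfac2]
            exact hold
        _ = q ^ 2 * (lpNorm p (x - y)) ^ 2 := by ring
    -- conclude
    rw [l2Norm]
    calc Real.sqrt (∑ i, ((mazur p x - mazur p y) i) ^ 2)
        ≤ Real.sqrt (q ^ 2 * (lpNorm p (x - y)) ^ 2) := Real.sqrt_le_sqrt htotal
      _ = Real.sqrt ((q * lpNorm p (x - y)) ^ 2) := by rw [mul_pow]
      _ = q * lpNorm p (x - y) := Real.sqrt_sq (by positivity)
      _ = (p/2) * lpNorm p (x - y) := by rw [hqdef]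
end

section
/- Let r ≥ 1 be a real number. For all real numbers a, b, one has |sign(a)·|a|^r − sign(b)·|b|^r| ≤ r · max(|a|, |b|)^{r−1} · |a − b|. -/
private lemma aux_bern (r x y : ℝ) (hr : 1 ≤ r) (hx : 0 ≤ x) (hxy : x ≤ y) :
    y ^ r - x ^ r ≤ r * y ^ (r - 1) * (y - x) := by
  have hy : 0 ≤ y := hx.trans hxy
  rcases hy.eq_or_lt with h | h
  · have hx0 : x = 0 := le_antisymm (h ▸ hxy) hx
    subst hx0; rw [← h]; simp
  · have hs : (-1 : ℝ) ≤ x / y - 1 := by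
      have : 0 ≤ x / y := div_nonneg hx h.le
      linarith
    have hb := one_add_mul_self_le_rpow_one_add hs hr
    have heq : (1 + (x / y - 1)) = x / y := by ring
    rw [heq, Real.div_rpow hx h.le] at hb
    have hyr : 0 < y ^ r := Real.rpow_pos_of_pos h r
    have hmul := mul_le_mul_of_nonneg_right hb hyr.le
    have hxr : x ^ r / y ^ r * y ^ r = x ^ r := div_mul_cancel₀ _ hyr.ne'
    rw [hxr] at hmul
    have hy1 : y ^ (r - 1) * y = y ^ r := by
      rw [← Real.rpow_add_one h.ne' (r - 1)]; ring_nf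
    have h5 : (1 + r * (x / y - 1)) * y ^ r = y ^ r + r * y ^ (r - 1) * (x - y) := by
      rw [← hy1]; field_simp
    rw [h5] at hmul
    linarith

private lemma sgn_nonneg (r x : ℝ) (hr : 1 ≤ r) (hx : 0 ≤ x) :
    Real.sign x * |x| ^ r = x ^ r := by
  rcases hx.eq_or_lt with h | h
  · rw [← h]; simp [Real.zero_rpow (by linarith : r ≠ 0)]
  · rw [Real.sign_of_pos h, abs_of_pos h, one_mul]

private lemma key (r : ℝ) (hr : 1 ≤ r) (a b : ℝ) (hba : b ≤ a) :
    |Real.sign a * |a| ^ r - Real.sign b * |b| ^ r| ≤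
      r * (max |a| |b|) ^ (r - 1) * |a - b| := by
  rcases le_total 0 b with hb | hb
  · -- both nonneg
    have ha : 0 ≤ a := hb.trans hba
    rw [sgn_nonneg r a hr ha, sgn_nonneg r b hr hb,
      abs_of_nonneg ha, abs_of_nonneg hb, max_eq_left hba,
      abs_of_nonneg (sub_nonneg.2 (Real.rpow_le_rpow hb hba (zero_le_one.trans hr))),
      abs_of_nonneg (sub_nonneg.2 hba)]
    exact aux_bern r b a hr hb hba
  · rcases le_total a 0 with ha | ha
    · -- both nonpos
      have h1 : Real.sign a * |a| ^ r = -((-a) ^ r) := by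
        have := sgn_nonneg r (-a) hr (by linarith)
        rw [Real.sign_neg, abs_neg] at this; linarith [this]
      have h2 : Real.sign b * |b| ^ r = -((-b) ^ r) := by
        have := sgn_nonneg r (-b) hr (by linarith)
        rw [Real.sign_neg, abs_neg] at this; linarith [this]
      rw [h1, h2, abs_of_nonpos ha, abs_of_nonpos hb, max_eq_right (by linarith : -a ≤ -b)]
      have hsub : -((-a) ^ r) - -((-b) ^ r) = (-b) ^ r - (-a) ^ r := by ring
      rw [hsub,
        abs_of_nonneg (sub_nonneg.2 (Real.rpow_le_rpow (by linarith) (by linarith)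
          (zero_le_one.trans hr))),
        abs_of_nonneg (sub_nonneg.2 hba)]
      have := aux_bern r (-a) (-b) hr (by linarith) (by linarith)
      linarith [this]
    · -- b ≤ 0 ≤ a
      rw [sgn_nonneg r a hr ha]
      have h2 : Real.sign b * |b| ^ r = -((-b) ^ r) := by
        have := sgn_nonneg r (-b) hr (by linarith)
        rw [Real.sign_neg, abs_neg] at this; linarith [this]
      rw [h2, abs_of_nonneg ha, abs_of_nonpos hb, abs_of_nonneg (by linarith : (0:ℝ) ≤ a - b)]
      set M := max a (-b) with hM
      have hMa : a ≤ M := le_max_left _ _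
      have hMb : -b ≤ M := le_max_right _ _
      have hM0 : 0 ≤ M := ha.trans hMa
      have hMr : 0 ≤ M ^ (r - 1) := Real.rpow_nonneg hM0 _
      have key1 : a ^ r ≤ M ^ (r - 1) * a := by
        calc a ^ r = a ^ (r - 1) * a := by
              rcases ha.eq_or_lt with h | h
              · rw [← h]; simp [Real.zero_rpow (by linarith : r ≠ 0)]
              · rw [← Real.rpow_add_one h.ne' (r - 1)]; ring_nf
          _ ≤ M ^ (r - 1) * a :=
              mul_le_mul_of_nonneg_right (Real.rpow_le_rpow ha hMa (by linarith)) ha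
      have key2 : (-b) ^ r ≤ M ^ (r - 1) * (-b) := by
        calc (-b) ^ r = (-b) ^ (r - 1) * (-b) := by
              rcases (by linarith : (0:ℝ) ≤ -b).eq_or_lt with h | h
              · rw [← h]; simp [Real.zero_rpow (by linarith : r ≠ 0)]
              · rw [← Real.rpow_add_one h.ne' (r - 1)]; ring_nf
          _ ≤ M ^ (r - 1) * (-b) :=
              mul_le_mul_of_nonneg_right
                (Real.rpow_le_rpow (by linarith) hMb (by linarith)) (by linarith)
      have habs : |a ^ r - -((-b) ^ r)| = a ^ r + (-b) ^ r := by
        rw [abs_of_nonneg]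
        · ring
        · have := Real.rpow_nonneg ha r
          have := Real.rpow_nonneg (by linarith : (0:ℝ) ≤ -b) r
          linarith
      rw [habs]
      have hrM : M ^ (r - 1) * (a - b) ≤ r * M ^ (r - 1) * (a - b) := by
        nlinarith [mul_nonneg hMr (by linarith : (0:ℝ) ≤ a - b)]
      nlinarith

/-- Pointwise inequality for the Mazur map: for `r ≥ 1` and all reals `a, b`,
`|sign(a)·|a|^r − sign(b)·|b|^r| ≤ r · max(|a|, |b|)^(r−1) · |a − b|`. -/
theorem stmt_9 (r : ℝ) (hr : 1 ≤ r) (a b : ℝ) :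
    |Real.sign a * |a| ^ r - Real.sign b * |b| ^ r| ≤
      r * (max |a| |b|) ^ (r - 1) * |a - b| := by
  rcases le_total b a with h | h
  · exact key r hr a b h
  · have := key r hr b a h
    rwa [abs_sub_comm, max_comm, abs_sub_comm b a] at this
end

section
/- Let p ≥ 2 be a real number and n a positive integer. For x ∈ ℝⁿ define h(x) ∈ ℝⁿ coordinatewise by h(x)_i = sign(x_i)·|x_i|^{p/2}, and define f : ℝⁿ → ℝⁿ by f(x) = (‖x‖_p / ‖h(x)‖₂)·h(x) for x ≠ 0 and f(0) = 0. Then, viewing the domain with the ℓ_p norm and the codomain with the Euclidean (ℓ₂) norm, f is (p+1)-Lipschitz: for all x, y ∈ ℝⁿ, ‖f(x) − f(y)‖₂ ≤ (p+1)·‖x − y‖_p. -/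
open Finset

/-- The rescaled Mazur map: `f(x) = (‖x‖_p/‖h(x)‖₂)·h(x)` for `x ≠ 0`, and `f(0) = 0`. -/
noncomputable def rescaledMazur (p : ℝ) {n : ℕ} (x : Fin n → ℝ) : Fin n → ℝ :=
  if x = 0 then 0 else (lpNorm p x / l2Norm (mazur p x)) • mazur p x

-- scalar derivative lemma
lemma hasDerivAt_signRpow {q : ℝ} (hq : 1 ≤ q) (a : ℝ) :
    HasDerivAt (fun s : ℝ => Real.sign s * |s| ^ q) (q * |a| ^ (q - 1)) a := by
  rcases lt_trichotomy a 0 with ha | ha | ha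
  · have h1 : HasDerivAt (fun s : ℝ => -((-s) ^ q)) (q * (-a) ^ (q - 1)) a := by
      have h2 : HasDerivAt (fun s : ℝ => -s) (-1 : ℝ) a := (hasDerivAt_id a).neg
      have h3 : HasDerivAt (fun u : ℝ => u ^ q) (q * (-a) ^ (q - 1)) (-a) :=
        Real.hasDerivAt_rpow_const (Or.inl (by linarith))
      have := (h3.comp a h2).neg
      exact this.congr_deriv (by ring)
    have : ∀ᶠ s in nhds a, Real.sign s * |s| ^ q = -((-s) ^ q) := by
      filter_upwards [eventually_lt_nhds ha] with s hs
      rw [Real.sign_of_neg hs, abs_of_neg hs]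
      ring
    have h4 := h1.congr_of_eventuallyEq this
    rwa [abs_of_neg ha]
  · subst ha
    rcases eq_or_lt_of_le hq with rfl | hq1
    · have : (fun s : ℝ => Real.sign s * |s| ^ (1:ℝ)) = fun s : ℝ => s := by
        funext s
        rw [Real.rpow_one]
        rcases lt_trichotomy s 0 with h | h | h
        · rw [Real.sign_of_neg h, abs_of_neg h]; ring
        · simp [h]
        · rw [Real.sign_of_pos h, abs_of_pos h]; ring
      rw [this]
      simpa using hasDerivAt_id' (0:ℝ)
    · have hd : q * |(0:ℝ)| ^ (q - 1) = 0 := by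
        rw [abs_zero, Real.zero_rpow (by linarith)]
        ring
      rw [hd]
      rw [hasDerivAt_iff_tendsto_slope]
      have hcong : ∀ s : ℝ, s ≠ 0 → |s| ^ (q - 1) = slope (fun s : ℝ => Real.sign s * |s| ^ q) 0 s := by
        intro s hs
        rw [slope_def_field]
        simp only [Real.sign_zero, zero_mul, abs_zero]
        rw [sub_zero, sub_zero]
        rcases lt_or_gt_of_ne hs with h | h
        · rw [Real.sign_of_neg h, abs_of_neg h, Real.rpow_sub (by linarith : (0:ℝ) < -s),
            Real.rpow_one]
          rw [div_neg]
          ring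
        · rw [Real.sign_of_pos h, abs_of_pos h, Real.rpow_sub h, Real.rpow_one]
          ring
      have htend : Filter.Tendsto (fun s : ℝ => |s| ^ (q - 1)) (nhdsWithin 0 {(0:ℝ)}ᶜ) (nhds 0) := by
        have h1 : Filter.Tendsto (fun s : ℝ => |s|) (nhdsWithin 0 {(0:ℝ)}ᶜ) (nhds 0) := by
          have := (continuous_abs.tendsto (0:ℝ))
          simpa using this.mono_left nhdsWithin_le_nhds
        have h2 : Filter.Tendsto (fun u : ℝ => u ^ (q - 1)) (nhds 0) (nhds 0) := by
          have := (Real.continuousAt_rpow_const 0 (q - 1) (Or.inr (by linarith))).tendsto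
          rwa [Real.zero_rpow (by linarith : q - 1 ≠ 0)] at this
        exact h2.comp h1
      exact htend.congr' (by filter_upwards [self_mem_nhdsWithin] with s hs using hcong s hs)
  · have h1 : HasDerivAt (fun s : ℝ => s ^ q) (q * a ^ (q - 1)) a :=
      Real.hasDerivAt_rpow_const (Or.inl (ne_of_gt ha))
    have : ∀ᶠ s in nhds a, Real.sign s * |s| ^ q = s ^ q := by
      filter_upwards [eventually_gt_nhds ha] with s hs
      rw [Real.sign_of_pos hs, abs_of_pos hs]
      ring
    have h4 := h1.congr_of_eventuallyEq this
    rwa [abs_of_pos ha]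

-- basic lemmas
lemma sum_abs_rpow_nonneg (p : ℝ) {n : ℕ} (x : Fin n → ℝ) : 0 ≤ ∑ i, |x i| ^ p := by
  positivity

lemma lpNorm_nonneg (p : ℝ) {n : ℕ} (x : Fin n → ℝ) : 0 ≤ lpNorm p x := by
  unfold lpNorm; positivity

lemma lpNorm_rpow {p : ℝ} (hp : 0 < p) {n : ℕ} (x : Fin n → ℝ) :
    lpNorm p x ^ p = ∑ i, |x i| ^ p := by
  rw [lpNorm, ← Real.rpow_mul (sum_abs_rpow_nonneg p x), one_div,
    inv_mul_cancel₀ hp.ne', Real.rpow_one]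

lemma lpNorm_zero {p : ℝ} (hp : 0 < p) {n : ℕ} : lpNorm p (0 : Fin n → ℝ) = 0 := by
  simp [lpNorm, Real.zero_rpow hp.ne', Real.zero_rpow (one_div_ne_zero hp.ne'), Real.zero_rpow (inv_ne_zero hp.ne')]

lemma lpNorm_pos {p : ℝ} (hp : 0 < p) {n : ℕ} {x : Fin n → ℝ} (hx : x ≠ 0) :
    0 < lpNorm p x := by
  obtain ⟨i, hi⟩ := Function.ne_iff.1 hx
  have h1 : 0 < ∑ j, |x j| ^ p := by
    refine Finset.sum_pos' (fun j _ => by positivity) ⟨i, Finset.mem_univ i, ?_⟩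
    have : 0 < |x i| := abs_pos.2 hi
    positivity
  exact Real.rpow_pos_of_pos h1 _

lemma lpNorm_sub_comm (p : ℝ) {n : ℕ} (x y : Fin n → ℝ) :
    lpNorm p (x - y) = lpNorm p (y - x) := by
  unfold lpNorm
  congr 1
  exact Finset.sum_congr rfl fun i _ => by rw [Pi.sub_apply, Pi.sub_apply, abs_sub_comm]

lemma lpNorm_triangle {p : ℝ} (hp : 1 ≤ p) {n : ℕ} (x y : Fin n → ℝ) :
    lpNorm p x ≤ lpNorm p y + lpNorm p (x - y) := by
  have h := Real.Lp_add_le (s := Finset.univ) (f := y) (g := x - y) hp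
  have h2 : ∀ i, y i + (x - y) i = x i := fun i => by simp
  unfold lpNorm
  calc (∑ i, |x i| ^ p) ^ (1/p) = (∑ i, |y i + (x - y) i| ^ p) ^ (1/p) := by
        congr 1; exact Finset.sum_congr rfl fun i _ => by rw [h2]
    _ ≤ _ := h

-- Euclidean transfer
noncomputable def toE {n : ℕ} (v : Fin n → ℝ) : EuclideanSpace ℝ (Fin n) :=
  (EuclideanSpace.equiv (Fin n) ℝ).symm v

lemma norm_toE {n : ℕ} (v : Fin n → ℝ) : ‖toE v‖ = l2Norm v := by
  rw [EuclideanSpace.norm_eq, l2Norm]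
  congr 1
  exact Finset.sum_congr rfl fun i _ => by
    rw [Real.norm_eq_abs, sq_abs]; rfl

lemma toE_sub {n : ℕ} (v w : Fin n → ℝ) : toE v - toE w = toE (v - w) := by
  rfl

lemma l2Norm_nonneg {n : ℕ} (v : Fin n → ℝ) : 0 ≤ l2Norm v := Real.sqrt_nonneg _

lemma l2Norm_sub_comm {n : ℕ} (v w : Fin n → ℝ) : l2Norm (v - w) = l2Norm (w - v) := by
  unfold l2Norm
  congr 1
  exact Finset.sum_congr rfl fun i _ => by rw [Pi.sub_apply, Pi.sub_apply]; ring

lemma l2Norm_smul {n : ℕ} (c : ℝ) (v : Fin n → ℝ) : l2Norm (c • v) = |c| * l2Norm v := by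
  unfold l2Norm
  rw [← Real.sqrt_sq_eq_abs, ← Real.sqrt_mul (sq_nonneg c)]
  congr 1
  rw [Finset.mul_sum]
  exact Finset.sum_congr rfl fun i _ => by rw [Pi.smul_apply, smul_eq_mul]; ring

lemma l2Norm_add_le {n : ℕ} (v w : Fin n → ℝ) : l2Norm (v + w) ≤ l2Norm v + l2Norm w := by
  have := norm_add_le (toE v) (toE w)
  rw [norm_toE, norm_toE, show toE v + toE w = toE (v + w) from rfl, norm_toE] at this
  exact this

lemma sq_mazur_apply {p : ℝ} (hp : 0 < p) (a : ℝ) :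
    (Real.sign a * |a| ^ (p / 2)) ^ 2 = |a| ^ p := by
  rcases eq_or_ne a 0 with rfl | ha
  · simp [Real.zero_rpow hp.ne']
  · have h1 : (Real.sign a) ^ 2 = 1 := by
      rcases lt_or_gt_of_ne ha with h | h
      · rw [Real.sign_of_neg h]; norm_num
      · rw [Real.sign_of_pos h]; norm_num
    rw [mul_pow, h1, one_mul, ← Real.rpow_natCast (|a| ^ (p/2)) 2,
      ← Real.rpow_mul (abs_nonneg a)]
    norm_num

lemma l2Norm_mazur {p : ℝ} (hp : 0 < p) {n : ℕ} (x : Fin n → ℝ) :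
    l2Norm (mazur p x) = lpNorm p x ^ (p / 2) := by
  unfold l2Norm mazur
  rw [Real.sqrt_eq_rpow, lpNorm, ← Real.rpow_mul (sum_abs_rpow_nonneg p x)]
  have : (∑ i, (Real.sign (x i) * |x i| ^ (p/2)) ^ 2) = ∑ i, |x i| ^ p :=
    Finset.sum_congr rfl fun i _ => sq_mazur_apply hp (x i)
  rw [this]
  congr 1
  field_simp

lemma sum_abs_rpow_interp {p : ℝ} (hp : 1 ≤ p) {n : ℕ} (x y : Fin n → ℝ) {t : ℝ}
    (ht0 : 0 ≤ t) (ht1 : t ≤ 1) :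
    ∑ i, |y i + t * (x i - y i)| ^ p ≤ max (∑ i, |x i| ^ p) (∑ i, |y i| ^ p) := by
  have key : ∀ i, |y i + t * (x i - y i)| ^ p ≤ (1 - t) * |y i| ^ p + t * |x i| ^ p := by
    intro i
    have habs : |y i + t * (x i - y i)| ≤ (1 - t) * |y i| + t * |x i| := by
      have h0 : y i + t * (x i - y i) = (1 - t) * y i + t * x i := by ring
      rw [h0]
      calc |(1-t) * y i + t * x i| ≤ |(1-t) * y i| + |t * x i| := abs_add_le _ _
        _ = (1-t) * |y i| + t * |x i| := by
            rw [abs_mul, abs_mul, abs_of_nonneg (by linarith : (0:ℝ) ≤ 1 - t),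
              abs_of_nonneg ht0]
    have h1 : |y i + t * (x i - y i)| ^ p ≤ ((1-t) * |y i| + t * |x i|) ^ p :=
      Real.rpow_le_rpow (abs_nonneg _) habs (by linarith)
    have h2 := (convexOn_rpow hp).2 (Set.mem_Ici.2 (abs_nonneg (y i)))
      (Set.mem_Ici.2 (abs_nonneg (x i))) (by linarith : (0:ℝ) ≤ 1 - t) ht0 (by ring)
    simp only [smul_eq_mul] at h2
    linarith
  have hsum : ∑ i, |y i + t * (x i - y i)| ^ p
      ≤ (1-t) * (∑ i, |y i| ^ p) + t * (∑ i, |x i| ^ p) := by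
    calc ∑ i, |y i + t * (x i - y i)| ^ p
        ≤ ∑ i, ((1-t) * |y i| ^ p + t * |x i| ^ p) := Finset.sum_le_sum fun i _ => key i
      _ = (1-t) * (∑ i, |y i| ^ p) + t * (∑ i, |x i| ^ p) := by
          rw [Finset.sum_add_distrib, ← Finset.mul_sum, ← Finset.mul_sum]
  refine hsum.trans ?_
  have hA : (∑ i, |y i| ^ p) ≤ max (∑ i, |x i| ^ p) (∑ i, |y i| ^ p) := le_max_right _ _
  have hB : (∑ i, |x i| ^ p) ≤ max (∑ i, |x i| ^ p) (∑ i, |y i| ^ p) := le_max_left _ _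
  nlinarith [hA, hB]

lemma mazur_lip {p : ℝ} (hp : 2 ≤ p) {n : ℕ} (x y : Fin n → ℝ) :
    l2Norm (mazur p x - mazur p y) ≤
      (p/2) * max (lpNorm p x) (lpNorm p y) ^ (p/2 - 1) * lpNorm p (x - y) := by
  have hp0 : 0 < p := by linarith
  have hq : 1 ≤ p/2 := by linarith
  set q : ℝ := p/2 with hqdef
  set M : ℝ := max (lpNorm p x) (lpNorm p y) with hMdef
  have hM0 : 0 ≤ M := le_trans (lpNorm_nonneg p x) (le_max_left _ _)
  set D : ℝ := lpNorm p (x - y) with hDdef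
  have hD0 : 0 ≤ D := lpNorm_nonneg _ _
  set C : ℝ := q * M ^ (q - 1) * D with hCdef
  have hC0 : 0 ≤ C := by
    have := Real.rpow_nonneg hM0 (q - 1)
    positivity
  set z : ℝ → Fin n → ℝ := fun t i => y i + t * (x i - y i) with hzdef
  set G : ℝ → (Fin n → ℝ) := fun t => mazur p (z t) with hGdef
  set G' : ℝ → (Fin n → ℝ) := fun t i => q * |z t i| ^ (q - 1) * (x i - y i) with hG'def
  have hderiv : ∀ t : ℝ, HasDerivAt (fun u => toE (G u)) (toE (G' t)) t := by
    intro t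
    have hG : HasDerivAt G (G' t) t := by
      rw [hasDerivAt_pi]
      intro i
      have haff : HasDerivAt (fun u : ℝ => y i + u * (x i - y i)) (x i - y i) t := by
        simpa using ((hasDerivAt_id t).mul_const (x i - y i)).const_add (y i)
      have hcomp := (hasDerivAt_signRpow hq (z t i)).comp t haff
      simpa [hGdef, hG'def, mazur, Function.comp_def] using hcomp
    exact ((EuclideanSpace.equiv (Fin n) ℝ).symm.hasFDerivAt).comp_hasDerivAt t hG
  have hzb : ∀ t : ℝ, t ∈ Set.Icc (0:ℝ) 1 → (∑ i, |z t i| ^ p) ≤ M ^ p := by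
    intro t ht
    have h1 := sum_abs_rpow_interp (by linarith : 1 ≤ p) x y ht.1 ht.2
    refine h1.trans ?_
    have hx : (∑ i, |x i| ^ p) = lpNorm p x ^ p := (lpNorm_rpow hp0 x).symm
    have hy : (∑ i, |y i| ^ p) = lpNorm p y ^ p := (lpNorm_rpow hp0 y).symm
    rw [hx, hy]
    exact max_le
      (Real.rpow_le_rpow (lpNorm_nonneg _ _) (le_max_left _ _) hp0.le)
      (Real.rpow_le_rpow (lpNorm_nonneg _ _) (le_max_right _ _) hp0.le)
  have claim1 : ∀ t : ℝ, t ∈ Set.Icc (0:ℝ) 1 →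
      (∑ i, |z t i| ^ (p-2) * (x i - y i)^2)
        ≤ (M ^ p) ^ ((p-2)/p) * (∑ i, |x i - y i| ^ p) ^ (2/p) := by
    intro t ht
    rcases eq_or_lt_of_le hp with hpe | hpl
    · rw [← hpe]
      norm_num
    · have hp2 : 0 < p - 2 := by linarith
      have hpq : (p/(p-2)).HolderConjugate (p/2) := by
        rw [Real.holderConjugate_iff]
        constructor
        · rw [lt_div_iff₀ hp2]; linarith
        · field_simp
          ring
      have hold := Real.inner_le_Lp_mul_Lq (s := Finset.univ)
        (f := fun i => |z t i| ^ (p-2)) (g := fun i => (x i - y i)^2) hpq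
      have e2 : ∀ i : Fin n, |(|z t i| ^ (p-2))| ^ (p/(p-2)) = |z t i| ^ p := by
        intro i
        rw [abs_of_nonneg (Real.rpow_nonneg (abs_nonneg _) _),
          ← Real.rpow_mul (abs_nonneg _)]
        congr 1
        field_simp
      have e3 : ∀ i : Fin n, |(x i - y i)^2| ^ (p/2) = |x i - y i| ^ p := by
        intro i
        rw [abs_of_nonneg (sq_nonneg _), ← sq_abs, ← Real.rpow_two,
          ← Real.rpow_mul (abs_nonneg _)]
        congr 1
        ring
      rw [Finset.sum_congr rfl fun i (_ : i ∈ Finset.univ) => e2 i,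
        Finset.sum_congr rfl fun i (_ : i ∈ Finset.univ) => e3 i,
        one_div_div, one_div_div] at hold
      refine hold.trans ?_
      apply mul_le_mul_of_nonneg_right
      · exact Real.rpow_le_rpow (by positivity) (hzb t ht) (by positivity)
      · positivity
  have hboundIcc : ∀ t : ℝ, t ∈ Set.Icc (0:ℝ) 1 → ‖toE (G' t)‖ ≤ C := by
    intro t ht
    rw [norm_toE]
    unfold l2Norm
    have hS : (∑ i, (G' t i)^2) ≤ C^2 := by
      have e1 : ∀ i : Fin n, (G' t i)^2 = q^2 * (|z t i| ^ (p - 2) * (x i - y i)^2) := by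
        intro i
        have hsq : (|z t i| ^ (q-1))^2 = |z t i| ^ (p - 2) := by
          rw [← Real.rpow_two, ← Real.rpow_mul (abs_nonneg _)]
          congr 1
          rw [hqdef]; ring
        calc (G' t i)^2 = q^2 * ((|z t i| ^ (q-1))^2 * (x i - y i)^2) := by
              simp only [hG'def]; ring
          _ = _ := by rw [hsq]
      rw [Finset.sum_congr rfl fun i (_ : i ∈ Finset.univ) => e1 i, ← Finset.mul_sum]
      have hC2 : C^2 = q^2 * ((M ^ p) ^ ((p-2)/p) * (∑ i, |x i - y i| ^ p) ^ (2/p)) := by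
        have hMsq : (M ^ (q-1))^2 = (M ^ p) ^ ((p-2)/p) := by
          rw [← Real.rpow_two, ← Real.rpow_mul hM0, ← Real.rpow_mul hM0]
          congr 1
          rw [hqdef]; field_simp
        have hDsq : D^2 = (∑ i, |x i - y i| ^ p) ^ (2/p) := by
          have hDe : D = (∑ i, |x i - y i| ^ p) ^ (1/p) := by
            simp [hDdef, lpNorm]
          rw [hDe, ← Real.rpow_two,
            ← Real.rpow_mul (by positivity : (0:ℝ) ≤ ∑ i, |x i - y i| ^ p)]
          congr 1
          ring
        rw [hCdef]
        rw [mul_pow, mul_pow, hMsq, hDsq]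
        ring
      rw [hC2]
      exact mul_le_mul_of_nonneg_left (claim1 t ht) (by positivity)
    calc Real.sqrt (∑ i, (G' t i)^2) ≤ Real.sqrt (C^2) := Real.sqrt_le_sqrt hS
      _ = C := Real.sqrt_sq hC0
  have hmvt := norm_image_sub_le_of_norm_deriv_le_segment_01'
    (f := fun u => toE (G u)) (f' := fun t => toE (G' t))
    (fun t ht => (hderiv t).hasDerivWithinAt)
    (fun t ht => hboundIcc t (Set.mem_Icc.2 ⟨ht.1, ht.2.le⟩))
  have hG1 : G 1 = mazur p x := by
    rw [hGdef]
    congr 1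
    funext i
    simp [hzdef]
  have hG0 : G 0 = mazur p y := by
    rw [hGdef]
    congr 1
    funext i
    simp [hzdef]
  have hmvt2 : ‖toE (G 1) - toE (G 0)‖ ≤ C := hmvt
  rw [hG1, hG0, toE_sub, norm_toE] at hmvt2
  exact hmvt2

lemma one_sub_rpow_le {u k : ℝ} (hu : 0 < u) (hu1 : u ≤ 1) (hk : 0 ≤ k) :
    1 - u ^ k ≤ (k + 1) * (1 - u) := by
  rcases le_total k 1 with h | h
  · have h1 : u ^ (1:ℝ) ≤ u ^ k := Real.rpow_le_rpow_of_exponent_ge hu hu1 h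
    rw [Real.rpow_one] at h1
    nlinarith
  · have hb := one_add_mul_self_le_rpow_one_add (s := u - 1) (by linarith) (p := k) h
    have h2 : (1 + (u - 1)) = u := by ring
    rw [h2] at hb
    nlinarith

theorem stmt_aux (p : ℝ) (hp : 2 ≤ p) {n : ℕ} (x y : Fin n → ℝ)
    (hle : lpNorm p y ≤ lpNorm p x) :
    l2Norm (rescaledMazur p x - rescaledMazur p y) ≤ (p + 1) * lpNorm p (x - y) := by
  have hp0 : 0 < p := by linarith
  have hD0 : 0 ≤ lpNorm p (x - y) := lpNorm_nonneg _ _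
  rcases eq_or_ne x 0 with rfl | hx
  · have hy : y = 0 := by
      by_contra hy
      have h1 : 0 < lpNorm p y := lpNorm_pos hp0 hy
      rw [lpNorm_zero hp0] at hle
      linarith
    subst hy
    have h0 : rescaledMazur p (0 : Fin n → ℝ) - rescaledMazur p 0 = 0 := by
      simp
    rw [h0]
    have : l2Norm (0 : Fin n → ℝ) = 0 := by simp [l2Norm]
    rw [this]
    positivity
  rcases eq_or_ne y 0 with rfl | hy
  · rw [rescaledMazur, if_neg hx, rescaledMazur, if_pos rfl, sub_zero,
      l2Norm_smul, l2Norm_mazur hp0]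
    have ht : 0 < lpNorm p x := lpNorm_pos hp0 hx
    have htr : 0 < lpNorm p x ^ (p/2) := Real.rpow_pos_of_pos ht _
    rw [abs_of_nonneg (by positivity), div_mul_cancel₀ _ htr.ne']
    rw [sub_zero]
    nlinarith [ht]
  -- main case
  have ht : 0 < lpNorm p x := lpNorm_pos hp0 hx
  have hs : 0 < lpNorm p y := lpNorm_pos hp0 hy
  have hr : 1 ≤ p/2 := by linarith
  have hfx : rescaledMazur p x = lpNorm p x ^ (1 - p/2) • mazur p x := by
    rw [rescaledMazur, if_neg hx, l2Norm_mazur hp0, Real.rpow_sub ht, Real.rpow_one]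
  have hfy : rescaledMazur p y = lpNorm p y ^ (1 - p/2) • mazur p y := by
    rw [rescaledMazur, if_neg hy, l2Norm_mazur hp0, Real.rpow_sub hs, Real.rpow_one]
  have hid : rescaledMazur p x - rescaledMazur p y
      = lpNorm p x ^ (1 - p/2) • (mazur p x - mazur p y)
        + (lpNorm p x ^ (1 - p/2) - lpNorm p y ^ (1 - p/2)) • mazur p y := by
    rw [hfx, hfy]
    funext i
    simp only [Pi.sub_apply, Pi.add_apply, Pi.smul_apply, smul_eq_mul]
    ring
  rw [hid]
  refine (l2Norm_add_le _ _).trans ?_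
  rw [l2Norm_smul, l2Norm_smul, l2Norm_mazur hp0]
  have h1 : |lpNorm p x ^ (1 - p/2)| * l2Norm (mazur p x - mazur p y)
      ≤ (p/2) * lpNorm p (x - y) := by
    rw [abs_of_nonneg (Real.rpow_nonneg ht.le _)]
    have hm := mazur_lip hp x y
    have hMx : max (lpNorm p x) (lpNorm p y) = lpNorm p x := max_eq_left hle
    rw [hMx] at hm
    calc lpNorm p x ^ (1 - p/2) * l2Norm (mazur p x - mazur p y)
        ≤ lpNorm p x ^ (1 - p/2) * ((p/2) * lpNorm p x ^ (p/2 - 1) * lpNorm p (x - y)) :=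
          mul_le_mul_of_nonneg_left hm (Real.rpow_nonneg ht.le _)
      _ = (p/2) * (lpNorm p x ^ (1 - p/2) * lpNorm p x ^ (p/2 - 1)) * lpNorm p (x - y) := by
          ring
      _ = (p/2) * lpNorm p (x - y) := by
          rw [← Real.rpow_add ht]
          norm_num
  have hts : lpNorm p x ^ (1 - p/2) ≤ lpNorm p y ^ (1 - p/2) := by
    have ha := Real.antitoneOn_rpow_Ioi_of_exponent_nonpos (r := 1 - p/2) (by linarith)
    exact ha (Set.mem_Ioi.2 hs) (Set.mem_Ioi.2 ht) hle
  have h2 : |lpNorm p x ^ (1 - p/2) - lpNorm p y ^ (1 - p/2)| * lpNorm p y ^ (p/2)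
      ≤ (p/2) * lpNorm p (x - y) := by
    rw [abs_of_nonpos (by linarith), neg_sub]
    have key : (lpNorm p y ^ (1 - p/2) - lpNorm p x ^ (1 - p/2)) * lpNorm p y ^ (p/2)
        ≤ (p/2) * (lpNorm p x - lpNorm p y) := by
      have e1 : lpNorm p y ^ (1 - p/2) * lpNorm p y ^ (p/2) = lpNorm p y := by
        rw [← Real.rpow_add hs]
        norm_num
      have e3 : lpNorm p y ^ (1:ℝ) * lpNorm p y ^ (p/2 - 1) = lpNorm p y ^ (p/2) := by
        rw [← Real.rpow_add hs]
        congr 1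
        ring
      rw [Real.rpow_one] at e3
      have e2 : lpNorm p x ^ (1 - p/2) * lpNorm p y ^ (p/2)
          = lpNorm p y * (lpNorm p y / lpNorm p x) ^ (p/2 - 1) := by
        rw [show (1:ℝ) - p/2 = -(p/2 - 1) by ring, Real.rpow_neg ht.le,
          Real.div_rpow hs.le ht.le, ← e3]
        field_simp
      have u1 : 0 < lpNorm p y / lpNorm p x := div_pos hs ht
      have u2 : lpNorm p y / lpNorm p x ≤ 1 := (div_le_one ht).2 hle
      have hb := one_sub_rpow_le u1 u2 (by linarith : 0 ≤ p/2 - 1)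
      have e4 : (lpNorm p y ^ (1 - p/2) - lpNorm p x ^ (1 - p/2)) * lpNorm p y ^ (p/2)
          = lpNorm p y * (1 - (lpNorm p y / lpNorm p x) ^ (p/2 - 1)) := by
        rw [sub_mul, e1, e2]
        ring
      rw [e4]
      have h5 : lpNorm p y * (1 - (lpNorm p y / lpNorm p x) ^ (p/2 - 1))
          ≤ lpNorm p y * ((p/2 - 1 + 1) * (1 - lpNorm p y / lpNorm p x)) :=
        mul_le_mul_of_nonneg_left hb hs.le
      refine h5.trans ?_
      have h6 : lpNorm p y * ((p/2 - 1 + 1) * (1 - lpNorm p y / lpNorm p x))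
          = (p/2) * (lpNorm p y * (1 - lpNorm p y / lpNorm p x)) := by
        ring
      rw [h6]
      apply mul_le_mul_of_nonneg_left _ (by linarith : (0:ℝ) ≤ p/2)
      have h7 : lpNorm p y * (1 - lpNorm p y / lpNorm p x)
          = lpNorm p y - lpNorm p y ^ 2 / lpNorm p x := by
        field_simp
      rw [h7]
      have h8 : 2 * lpNorm p y - lpNorm p x ≤ lpNorm p y ^ 2 / lpNorm p x := by
        rw [le_div_iff₀ ht]
        nlinarith [sq_nonneg (lpNorm p x - lpNorm p y)]
      linarith
    have h9 : lpNorm p x - lpNorm p y ≤ lpNorm p (x - y) := by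
      have := lpNorm_triangle (by linarith : 1 ≤ p) x y
      linarith
    refine key.trans ?_
    exact mul_le_mul_of_nonneg_left h9 (by linarith)
  refine (add_le_add h1 h2).trans ?_
  nlinarith [hD0]

/-- The rescaled Mazur map is `(p+1)`-Lipschitz from `ℓ_pⁿ` to `ℓ₂ⁿ`. -/
theorem stmt_11 (p : ℝ) (hp : 2 ≤ p) (n : ℕ) (hn : 0 < n) (x y : Fin n → ℝ) :
    l2Norm (rescaledMazur p x - rescaledMazur p y) ≤ (p + 1) * lpNorm p (x - y) := by
  rcases le_total (lpNorm p y) (lpNorm p x) with h | h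
  · exact stmt_aux p hp x y h
  · rw [l2Norm_sub_comm, lpNorm_sub_comm]
    exact stmt_aux p hp y x h
end
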